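/- arXiv:1606.00974 — 3 statements merged into one kernel-verified Lean document; each statement's English description precedes it below -/
import Mathlib

section
/- Let n and r be integers with r ≥ 2 and n/2 < 4r < n, and let G be the circulant graph C_n(1,…,r) on vertex set ZMod n (so G is 2r-regular with m = rn edges). Then, with decodability in the q-odd sense: the minimum degree of G is 2r, b_G = 2r, and u_{2r} = n; that is, the minimum number of edges whose deletion yields an undecodable spanning subgraph is exactly 2r, and there are exactly n such 2r-element edge sets (namely, for each vertex, the set of 2r edges incident with it). -/
set_option linter.unusedVariables false
set_option linter.unusedSectionVars false
set_option maxHeartbeats 1000000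


/-- The circulant graph `C_n(1, …, r)` on `ZMod n`: distinct `i` and `j` are adjacent iff
`i − j ≡ ±k (mod n)` for some `1 ≤ k ≤ r`. -/
def circulant (n r : ℕ) : SimpleGraph (ZMod n) :=
  SimpleGraph.fromRel (fun i j => ∃ k : ℕ, 1 ≤ k ∧ k ≤ r ∧ i - j = (k : ZMod n))

/-- Decodability (over `GF(q)` with `q` odd) of a simple graph: every connected component
contains an odd cycle, i.e. no connected component is 2-colorable. -/
def OddDecodable {V : Type*} (H : SimpleGraph V) : Prop :=
  ∀ c : H.ConnectedComponent, ¬ (H.induce c.supp).Colorable 2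

/-- `uG G x` is the number of `x`-element subsets `D` of the edge set of `G` such that the
spanning subgraph `G − D` is not decodable (`q` odd sense). -/
noncomputable def uG {V : Type*} (G : SimpleGraph V) (x : ℕ) : ℕ :=
  Nat.card {D : Finset (Sym2 V) //
    ↑D ⊆ G.edgeSet ∧ D.card = x ∧ ¬ OddDecodable (G.deleteEdges ↑D)}

/-- `bCut G` is the least cardinality of a set `D` of edges of `G` such that `G − D` is
not decodable (`q` odd sense). -/
noncomputable def bCut {V : Type*} (G : SimpleGraph V) : ℕ :=
  sInf {x : ℕ | 0 < uG G x}

/-- `cutSize G U` is the number of edges of `G` with exactly one endpoint in `U`. -/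
noncomputable def cutSize {V : Type*} (G : SimpleGraph V) (U : Set V) : ℕ :=
  Nat.card {e : Sym2 V // e ∈ G.edgeSet ∧ ∃ a b, e = s(a, b) ∧ a ∈ U ∧ b ∉ U}

/-- `maxCut G` is the maximum cut size of `G`. -/
noncomputable def maxCut {V : Type*} (G : SimpleGraph V) : ℕ :=
  sSup {c : ℕ | ∃ U : Set V, c = cutSize G U}

namespace CircAux

variable {n r : ℕ}
lemma cast_ne_zero (hn : 0 < n) {m : ℕ} (h1 : 1 ≤ m) (h2 : m < n) : (m : ZMod n) ≠ 0 := by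
  haveI : NeZero n := ⟨hn.ne'⟩
  rw [Ne, ZMod.natCast_eq_zero_iff]
  exact fun hd => absurd (Nat.le_of_dvd h1 hd) (by omega)

lemma cast_inj_lt (hn : 0 < n) {a b : ℕ} (ha : a < n) (hb : b < n)
    (h : (a : ZMod n) = (b : ZMod n)) : a = b := by
  haveI : NeZero n := ⟨hn.ne'⟩
  have := congrArg ZMod.val h
  rwa [ZMod.val_cast_of_lt ha, ZMod.val_cast_of_lt hb] at this

lemma adj_iff (h2 : 4 * r < n) {i j : ZMod n} :
    (circulant n r).Adj i j ↔ ∃ k : ℕ, 1 ≤ k ∧ k ≤ r ∧ (i - j = (k : ZMod n) ∨ j - i = (k : ZMod n)) := by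
  have hn : 0 < n := by omega
  constructor
  · rintro ⟨hne, ⟨k, h1, hk, he⟩ | ⟨k, h1, hk, he⟩⟩
    · exact ⟨k, h1, hk, Or.inl he⟩
    · exact ⟨k, h1, hk, Or.inr he⟩
  · rintro ⟨k, h1, hk, he⟩
    have hne : i ≠ j := by
      rcases he with he | he <;>
      · intro hij
        rw [hij] at he
        simp only [sub_self] at he
        exact cast_ne_zero hn h1 (by omega) he.symm
    rcases he with he | he
    · exact ⟨hne, Or.inl ⟨k, h1, hk, he⟩⟩
    · exact ⟨hne, Or.inr ⟨k, h1, hk, he⟩⟩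

lemma adj_shift (h2 : 4 * r < n) {k : ℕ} (h1 : 1 ≤ k) (hk : k ≤ r) (i : ZMod n) :
    (circulant n r).Adj i (i + (k : ZMod n)) := by
  rw [adj_iff h2]
  exact ⟨k, h1, hk, Or.inr (by ring)⟩

/-- canonical form of an edge -/
lemma edge_repr (h2 : 4 * r < n) {e : Sym2 (ZMod n)} (he : e ∈ (circulant n r).edgeSet) :
    ∃ i : ZMod n, ∃ k : ℕ, 1 ≤ k ∧ k ≤ r ∧ e = s(i, i + (k : ZMod n)) := by
  induction e with
  | h x y =>
    rw [SimpleGraph.mem_edgeSet, adj_iff h2] at he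
    obtain ⟨k, h1, hk, he | he⟩ := he
    · exact ⟨y, k, h1, hk, by rw [Sym2.eq_swap]; congr 1; rw [← he]; ring⟩
    · exact ⟨x, k, h1, hk, by congr 1; rw [← he]; ring⟩

/-- two canonical forms agree -/
lemma edge_repr_unique (h2 : 4 * r < n) {i j : ZMod n} {k l : ℕ}
    (hk1 : 1 ≤ k) (hkr : k ≤ r) (hl1 : 1 ≤ l) (hlr : l ≤ r)
    (h : s(i, i + (k : ZMod n)) = s(j, j + (l : ZMod n))) : i = j ∧ k = l := by
  have hn : 0 < n := by omega
  rw [Sym2.eq_iff] at h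
  rcases h with ⟨h1, h2'⟩ | ⟨h1, h2'⟩
  · subst h1
    have : (k : ZMod n) = (l : ZMod n) := by
      have := h2'
      exact add_left_cancel this
    exact ⟨rfl, cast_inj_lt hn (by omega) (by omega) this⟩
  · exfalso
    -- i = j + l and i + k = j
    have : ((k + l : ℕ) : ZMod n) = 0 := by
      push_cast
      have : i + (k : ZMod n) + (l : ZMod n) = i := by
        rw [h2']; rw [h1]
      linear_combination this
    exact cast_ne_zero hn (by omega) (by omega) this

section Deg


/-- degree computation -/
lemma degree_eq (h2 : 4 * r < n) (hr : 1 ≤ r) (v : ZMod n) :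
    Nat.card {w : ZMod n // (circulant n r).Adj v w} = 2 * r := by
  have hn : 0 < n := by omega
  haveI : NeZero n := ⟨hn.ne'⟩
  classical
  rw [Nat.card_eq_fintype_card, Fintype.card_subtype]
  have hset : (Finset.univ.filter (fun w => (circulant n r).Adj v w)) =
      ((Finset.Icc 1 r).image (fun k : ℕ => v + (k : ZMod n))) ∪
      ((Finset.Icc 1 r).image (fun k : ℕ => v - (k : ZMod n))) := by
    ext w
    simp only [Finset.mem_filter, Finset.mem_univ, true_and, Finset.mem_union,
      Finset.mem_image, Finset.mem_Icc]
    rw [adj_iff h2]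
    constructor
    · rintro ⟨k, h1, hk, he | he⟩
      · exact Or.inr ⟨k, ⟨h1, hk⟩, by rw [← he]; ring⟩
      · exact Or.inl ⟨k, ⟨h1, hk⟩, by rw [← he]; ring⟩
    · rintro (⟨k, ⟨h1, hk⟩, he⟩ | ⟨k, ⟨h1, hk⟩, he⟩)
      · exact ⟨k, h1, hk, Or.inr (by rw [← he]; ring)⟩
      · exact ⟨k, h1, hk, Or.inl (by rw [← he]; ring)⟩
  rw [hset]
  have hinj1 : Set.InjOn (fun k : ℕ => v + (k : ZMod n)) (Finset.Icc 1 r) := by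
    intro a ha b hb hab
    simp only [Finset.coe_Icc, Set.mem_Icc] at ha hb
    exact cast_inj_lt hn (by omega) (by omega) (add_left_cancel hab)
  have hinj2 : Set.InjOn (fun k : ℕ => v - (k : ZMod n)) (Finset.Icc 1 r) := by
    intro a ha b hb hab
    simp only [Finset.coe_Icc, Set.mem_Icc] at ha hb
    refine cast_inj_lt hn (by omega) (by omega) ?_
    have : v - (a : ZMod n) = v - (b : ZMod n) := hab
    linear_combination -this
  have hdisj : Disjoint ((Finset.Icc 1 r).image (fun k : ℕ => v + (k : ZMod n)))
      ((Finset.Icc 1 r).image (fun k : ℕ => v - (k : ZMod n))) := by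
    rw [Finset.disjoint_left]
    rintro x hx hy
    simp only [Finset.mem_image, Finset.mem_Icc] at hx hy
    obtain ⟨a, ⟨ha1, har⟩, hax⟩ := hx
    obtain ⟨b, ⟨hb1, hbr⟩, hbx⟩ := hy
    have : ((a + b : ℕ) : ZMod n) = 0 := by
      push_cast
      have : v + (a : ZMod n) = v - (b : ZMod n) := by rw [hax, hbx]
      linear_combination this
    exact cast_ne_zero hn (by omega) (by omega) this
  rw [Finset.card_union_of_disjoint hdisj, Finset.card_image_of_injOn hinj1,
    Finset.card_image_of_injOn hinj2, Nat.card_Icc]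
  omega

end Deg


section WithNeZero
variable [NeZero n]
/-- The set of `i` where membership of `i` and `i+k` in `S` differ. -/
def xset (S : Finset (ZMod n)) (k : ℕ) : Finset (ZMod n) :=
  Finset.univ.filter (fun i => ¬ ((i ∈ S) ↔ (i + (k : ZMod n) ∈ S)))

lemma mem_xset {S : Finset (ZMod n)} {k : ℕ} {i : ZMod n} :
    i ∈ xset S k ↔ ¬ ((i ∈ S) ↔ (i + (k : ZMod n) ∈ S)) := by
  simp [xset]

def outS (S : Finset (ZMod n)) (k : ℕ) : Finset (ZMod n) :=
  S.filter (fun i => i + (k : ZMod n) ∉ S)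

def inS (S : Finset (ZMod n)) (k : ℕ) : Finset (ZMod n) :=
  Sᶜ.filter (fun i => i + (k : ZMod n) ∈ S)

lemma xset_eq_union (S : Finset (ZMod n)) (k : ℕ) :
    xset S k = outS S k ∪ inS S k := by
  ext i
  simp only [mem_xset, outS, inS, Finset.mem_union, Finset.mem_filter, Finset.mem_compl]
  by_cases h1 : i ∈ S <;> by_cases h2 : i + (k : ZMod n) ∈ S <;> simp [h1, h2]

lemma disj_out_in (S : Finset (ZMod n)) (k : ℕ) : Disjoint (outS S k) (inS S k) := by
  rw [Finset.disjoint_left]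
  intro a ha hb
  simp only [outS, inS, Finset.mem_filter, Finset.mem_compl] at ha hb
  exact hb.1 ha.1

lemma card_out_eq_in (S : Finset (ZMod n)) (k : ℕ) :
    (outS S k).card = (inS S k).card := by
  classical
  have hmap : (inS S k).image (fun i => i + (k : ZMod n)) =
      S.filter (fun j => j - (k : ZMod n) ∉ S) := by
    ext j
    simp only [inS, Finset.mem_image, Finset.mem_filter, Finset.mem_compl]
    constructor
    · rintro ⟨i, ⟨hi1, hi2⟩, rfl⟩
      simpa using ⟨hi2, hi1⟩
    · rintro ⟨hj1, hj2⟩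
      exact ⟨j - (k : ZMod n), ⟨by simpa using hj2, by simpa using hj1⟩, by ring⟩
  have hmap2 : (S.filter (fun i => i + (k : ZMod n) ∈ S)).image (fun i => i + (k : ZMod n)) =
      S.filter (fun j => j - (k : ZMod n) ∈ S) := by
    ext j
    simp only [Finset.mem_image, Finset.mem_filter]
    constructor
    · rintro ⟨i, ⟨hi1, hi2⟩, rfl⟩
      simpa using ⟨hi2, hi1⟩
    · rintro ⟨hj1, hj2⟩
      exact ⟨j - (k : ZMod n), ⟨by simpa using hj2, by simpa using hj1⟩, by ring⟩
  have hinj : Function.Injective (fun i : ZMod n => i + (k : ZMod n)) :=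
    add_left_injective _
  have e1 : (inS S k).card = (S.filter (fun j => j - (k : ZMod n) ∉ S)).card := by
    rw [← hmap, Finset.card_image_of_injective _ hinj]
  have e2 : (S.filter (fun i => i + (k : ZMod n) ∈ S)).card
      = (S.filter (fun j => j - (k : ZMod n) ∈ S)).card := by
    rw [← hmap2, Finset.card_image_of_injective _ hinj]
  have e3 := Finset.card_filter_add_card_filter_not
    (s := S) (p := fun i => i + (k : ZMod n) ∈ S)
  have e4 := Finset.card_filter_add_card_filter_not
    (s := S) (p := fun j => j - (k : ZMod n) ∈ S)
  have : (outS S k).card = (S.filter (fun i => ¬ (i + (k : ZMod n) ∈ S))).card := rfl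
  omega

lemma card_xset_eq (S : Finset (ZMod n)) (k : ℕ) :
    (xset S k).card = 2 * (outS S k).card := by
  rw [xset_eq_union, Finset.card_union_of_disjoint (disj_out_in S k), card_out_eq_in S k]
  omega

lemma xset_empty_iff {S : Finset (ZMod n)} {k : ℕ} :
    xset S k = ∅ ↔ ∀ i : ZMod n, i ∈ S ↔ i + (k : ZMod n) ∈ S := by
  simp only [Finset.eq_empty_iff_forall_notMem, mem_xset, not_not]

lemma two_le_card_xset {S : Finset (ZMod n)} {k : ℕ} (h : xset S k ≠ ∅) :
    2 ≤ (xset S k).card := by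
  have h1 : 0 < (xset S k).card := Finset.card_pos.2 (Finset.nonempty_of_ne_empty h)
  rw [card_xset_eq] at h1 ⊢
  omega

/-- The stabilizer of a finset under translation. -/
def stab (S : Finset (ZMod n)) : AddSubgroup (ZMod n) where
  carrier := {z | ∀ i, i ∈ S ↔ i + z ∈ S}
  zero_mem' := by intro i; simp
  add_mem' := by
    intro a b ha hb i
    rw [ha i, hb (i + a), add_assoc]
  neg_mem' := by
    intro a ha i
    have := ha (i + -a)
    rw [iff_comm] at this
    simpa using this

lemma mem_stab {S : Finset (ZMod n)} {z : ZMod n} :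
    z ∈ stab S ↔ ∀ i, i ∈ S ↔ i + z ∈ S := Iff.rfl

lemma stab_gcd {S : Finset (ZMod n)} {a b : ℕ}
    (ha : (a : ZMod n) ∈ stab S) (hb : (b : ZMod n) ∈ stab S) :
    ((Nat.gcd a b : ℕ) : ZMod n) ∈ stab S := by
  have hbez := Nat.gcd_eq_gcd_ab a b
  have hcast : ((Nat.gcd a b : ℕ) : ZMod n) =
      (Nat.gcdA a b) • (a : ZMod n) + (Nat.gcdB a b) • (b : ZMod n) := by
    have : (((Nat.gcd a b : ℤ)) : ZMod n) = ((a * Nat.gcdA a b + b * Nat.gcdB a b : ℤ) : ZMod n) := by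
      exact_mod_cast congrArg (fun z : ℤ => (z : ZMod n)) hbez
    push_cast at this ⊢
    rw [this]
    ring_nf
  rw [hcast]
  exact AddSubgroup.add_mem _ (AddSubgroup.zsmul_mem _ ha _) (AddSubgroup.zsmul_mem _ hb _)

lemma stab_one_trivial {S : Finset (ZMod n)} (h : (1 : ZMod n) ∈ stab S) :
    S = ∅ ∨ S = Finset.univ := by
  by_cases hS : S = ∅
  · exact Or.inl hS
  · right
    obtain ⟨s₀, hs₀⟩ := Finset.nonempty_of_ne_empty hS
    have hall : ∀ z : ZMod n, z ∈ stab S := by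
      intro z
      have : z = z.val • (1 : ZMod n) := by
        simp [nsmul_eq_mul, ZMod.natCast_val, ZMod.cast_id]
      rw [this]
      exact AddSubgroup.nsmul_mem _ h _
    ext j
    simp only [Finset.mem_univ, iff_true]
    have := (mem_stab.1 (hall (j - s₀))) s₀
    rw [add_sub_cancel] at this
    exact this.1 hs₀

/-- Orbit bound: a nonempty finset invariant under adding `g` (with `g ∣ n`) has
at least `n / g` elements. -/
lemma orbit_card_le {B : Finset (ZMod n)} {g : ℕ} (hg : 0 < g) (hgn : g ∣ n)
    (hinv : ∀ i ∈ B, i + (g : ZMod n) ∈ B) {b : ZMod n} (hb : b ∈ B) :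
    n / g ≤ B.card := by
  have hn : 0 < n := Nat.pos_of_ne_zero (NeZero.ne n)
  have hmem : ∀ t : ℕ, b + ((t * g : ℕ) : ZMod n) ∈ B := by
    intro t
    induction t with
    | zero => simpa using hb
    | succ t ih =>
      have : b + (((t+1) * g : ℕ) : ZMod n) = (b + ((t * g : ℕ) : ZMod n)) + (g : ZMod n) := by
        push_cast; ring
      rw [this]
      exact hinv _ ih
  have key : (Finset.range (n / g)).card ≤ B.card := by
    apply Finset.card_le_card_of_injOn (fun t : ℕ => b + ((t * g : ℕ) : ZMod n))
      (fun t ht => hmem t)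
    intro t₁ ht₁ t₂ ht₂ heq
    simp only [Finset.coe_range, Set.mem_Iio] at ht₁ ht₂
    have h1 : t₁ * g < n := by
      have := Nat.mul_le_mul_right g (Nat.succ_le_of_lt ht₁)
      have h2 : (n / g) * g = n := Nat.div_mul_cancel hgn
      nlinarith [Nat.lt_irrefl 0]
    have h2 : t₂ * g < n := by
      have := Nat.mul_le_mul_right g (Nat.succ_le_of_lt ht₂)
      have h2 : (n / g) * g = n := Nat.div_mul_cancel hgn
      nlinarith [Nat.lt_irrefl 0]
    have : ((t₁ * g : ℕ) : ZMod n) = ((t₂ * g : ℕ) : ZMod n) := by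
      have := add_left_cancel heq
      exact this
    have := congrArg ZMod.val this
    rw [ZMod.val_cast_of_lt h1, ZMod.val_cast_of_lt h2] at this
    exact Nat.eq_of_mul_eq_mul_right hg this
  simpa using key

lemma add_val_sub (x a : ZMod n) : a + (((x - a).val : ℕ) : ZMod n) = x := by
  rw [ZMod.natCast_val, ZMod.cast_id]; ring

lemma val_eq_zero_iff (x : ZMod n) : x.val = 0 ↔ x = 0 := by
  constructor
  · intro h
    have := add_val_sub x 0
    simpa [h] using this.symm
  · intro h; simp [h]

omit [NeZero n] in
lemma val_neg_one_eq (hn : 1 < n) : (-1 : ZMod n).val = n - 1 := by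
  have h1 : ((n - 1 : ℕ) : ZMod n) = -1 := by
    have : ((n : ℕ) : ZMod n) = 0 := ZMod.natCast_self n
    push_cast [Nat.cast_sub (le_of_lt hn)]
    rw [this]; ring
  rw [← h1, ZMod.val_cast_of_lt (by omega)]

lemma prop1 (S : Finset (ZMod n)) (a b : ZMod n) (ha : a + 1 ∉ S)
    (hIn : ∀ i, i ∉ S → i + 1 ∈ S → i = b) :
    ∀ t : ℕ, 1 ≤ t → t ≤ (b - a).val → a + (t : ZMod n) ∉ S := by
  intro t
  induction t with
  | zero => omega
  | succ t ih =>
    intro _ hle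
    by_cases ht : t = 0
    · subst ht; simpa using ha
    · have hihle : t ≤ (b - a).val := by omega
      have hih : a + (t : ZMod n) ∉ S := ih (by omega) hihle
      have hneq : a + (t : ZMod n) ≠ b := by
        intro h
        have : b - a = (t : ZMod n) := by rw [← h]; ring
        have hv : ((t : ZMod n)).val = t := ZMod.val_cast_of_lt (by
          have : (b - a).val < n := ZMod.val_lt _
          omega)
        rw [this, hv] at hle
        omega
      intro hmem
      have : a + (t : ZMod n) = b := hIn _ hih (by
        have : a + ((t + 1 : ℕ) : ZMod n) = a + (t : ZMod n) + 1 := by push_cast; ring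
        rwa [this] at hmem)
      exact hneq this

/-- The four-element bound on `xset S 2` when `xset S 1` has exactly the boundary pair. -/
lemma four_le_xset2 (hn : 8 < n) {S : Finset (ZMod n)} (hS2 : 2 ≤ S.card)
    (hS2' : S.card ≤ n - 2) {a b : ZMod n}
    (haS : a ∈ S) (ha1 : a + 1 ∉ S) (hbS : b ∉ S) (hb1 : b + 1 ∈ S)
    (hOut : ∀ i, i ∈ S → i + 1 ∉ S → i = a)
    (hIn : ∀ i, i ∉ S → i + 1 ∈ S → i = b) :
    4 ≤ (xset S 2).card := by
  classical
  have hab : a ≠ b := fun h => hbS (h ▸ haS)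
  -- propagation out of S
  have notS : ∀ t : ℕ, 1 ≤ t → t ≤ (b - a).val → a + (t : ZMod n) ∉ S :=
    prop1 S a b ha1 hIn
  -- propagation into S, via the complement
  have memS : ∀ t : ℕ, 1 ≤ t → t ≤ (a - b).val → b + (t : ZMod n) ∈ S := by
    have h := prop1 Sᶜ b a (by simpa using hb1)
      (fun i hi hi1 => hOut i (by simpa using hi) (by simpa using hi1))
    intro t h1 h2
    have := h t h1 h2
    simpa using this
  set vab := (a - b).val with hvab
  set vba := (b - a).val with hvba
  have hvabn : vab < n := ZMod.val_lt _
  have hvban : vba < n := ZMod.val_lt _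
  have hvab0 : vab ≠ 0 := by
    rw [hvab, Ne, val_eq_zero_iff, sub_eq_zero]; exact hab
  have hvba0 : vba ≠ 0 := by
    rw [hvba, Ne, val_eq_zero_iff, sub_eq_zero]; exact fun h => hab h.symm
  -- vab ≥ 2
  have hvab2 : 2 ≤ vab := by
    by_contra h
    have hv1 : vab = 1 := by omega
    -- then S ⊆ {a}
    have hsub : S ⊆ {a} := by
      intro x hx
      rw [Finset.mem_singleton]
      by_contra hxa
      have ht0 : (x - a).val ≠ 0 := by
        rw [Ne, val_eq_zero_iff, sub_eq_zero]; exact hxa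
      have habv : b = a + (-1 : ZMod n) := by
        have h' := add_val_sub a b
        rw [← hvab, hv1] at h'
        push_cast at h'
        linear_combination h'
      have hvban' : vba = n - 1 := by
        rw [hvba, habv]
        have : a + (-1:ZMod n) - a = -1 := by ring
        rw [this, val_neg_one_eq (by omega)]
      have hltx := ZMod.val_lt (x - a)
      have := notS ((x - a).val) (by omega) (by rw [hvban']; omega)
      rw [add_val_sub] at this
      exact this hx
    have := Finset.card_le_card hsub
    simp at this
    omega
  -- vba ≥ 2
  have hvba2 : 2 ≤ vba := by
    by_contra h
    have hv1 : vba = 1 := by omega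
    have hsub : Sᶜ ⊆ {b} := by
      intro x hx
      rw [Finset.mem_compl] at hx
      rw [Finset.mem_singleton]
      by_contra hxb
      have ht0 : (x - b).val ≠ 0 := by
        rw [Ne, val_eq_zero_iff, sub_eq_zero]; exact hxb
      have habv : a = b + (-1 : ZMod n) := by
        have h' := add_val_sub b a
        rw [← hvba, hv1] at h'
        push_cast at h'
        linear_combination h'
      have hvabn' : vab = n - 1 := by
        rw [hvab, habv]
        have : b + (-1:ZMod n) - b = -1 := by ring
        rw [this, val_neg_one_eq (by omega)]
      have hltx := ZMod.val_lt (x - b)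
      have := memS ((x - b).val) (by omega) (by rw [hvabn']; omega)
      rw [add_val_sub] at this
      exact hx this
    have hcompl := Finset.card_le_card hsub
    rw [Finset.card_compl, Finset.card_singleton, ZMod.card] at hcompl
    omega
  -- the four members
  have mema : a ∈ xset S 2 := by
    rw [mem_xset]
    intro h
    exact (notS 2 (by omega) (by omega)) (h.1 haS)
  have memb : b ∈ xset S 2 := by
    rw [mem_xset]
    intro h
    exact hbS (h.2 (memS 2 (by omega) (by omega)))
  have mema1 : a - 1 ∈ xset S 2 := by
    rw [mem_xset]
    have h1 : a - 1 ∈ S := by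
      have := memS (vab - 1) (by omega) (by omega)
      have hc : b + ((vab - 1 : ℕ) : ZMod n) = a - 1 := by
        have hv : ((vab : ℕ) : ZMod n) = a - b := by
          rw [hvab, ZMod.natCast_val, ZMod.cast_id]
        push_cast [Nat.cast_sub (by omega : 1 ≤ vab)]
        rw [hv]; ring
      rwa [hc] at this
    have h2 : a - 1 + ((2:ℕ) : ZMod n) ∉ S := by
      have : a - 1 + ((2:ℕ) : ZMod n) = a + 1 := by push_cast; ring
      rw [this]; exact ha1
    exact fun h => h2 (h.1 h1)
  have memb1 : b - 1 ∈ xset S 2 := by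
    rw [mem_xset]
    have h1 : b - 1 ∉ S := by
      have := notS (vba - 1) (by omega) (by omega)
      have hc : a + ((vba - 1 : ℕ) : ZMod n) = b - 1 := by
        have hv : ((vba : ℕ) : ZMod n) = b - a := by
          rw [hvba, ZMod.natCast_val, ZMod.cast_id]
        push_cast [Nat.cast_sub (by omega : 1 ≤ vba)]
        rw [hv]; ring
      rwa [hc] at this
    have h2 : b - 1 + ((2:ℕ) : ZMod n) ∈ S := by
      have : b - 1 + ((2:ℕ) : ZMod n) = b + 1 := by push_cast; ring
      rw [this]; exact hb1
    exact fun h => h1 (h.2 h2)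
  -- distinctness
  have hone : (1 : ZMod n) ≠ 0 := by
    intro h
    have : ((1:ℕ) : ZMod n) = 0 := by push_cast; exact h
    rw [ZMod.natCast_eq_zero_iff] at this
    have := Nat.le_of_dvd Nat.one_pos this
    omega
  have d1 : a ≠ a - 1 := by intro h; apply hone; linear_combination h
  have d2 : b ≠ b - 1 := by intro h; apply hone; linear_combination h
  have hbS1 : a - 1 ∈ S := by
    rw [mem_xset] at mema1
    by_contra h
    -- we already showed a-1 ∈ S above; reprove quickly
    have := memS (vab - 1) (by omega) (by omega)
    have hc : b + ((vab - 1 : ℕ) : ZMod n) = a - 1 := by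
      have hv : ((vab : ℕ) : ZMod n) = a - b := by
        rw [hvab, ZMod.natCast_val, ZMod.cast_id]
      push_cast [Nat.cast_sub (by omega : 1 ≤ vab)]
      rw [hv]; ring
    rw [hc] at this
    exact h this
  have hbnS1 : b - 1 ∉ S := by
    have := notS (vba - 1) (by omega) (by omega)
    have hc : a + ((vba - 1 : ℕ) : ZMod n) = b - 1 := by
      have hv : ((vba : ℕ) : ZMod n) = b - a := by
        rw [hvba, ZMod.natCast_val, ZMod.cast_id]
      push_cast [Nat.cast_sub (by omega : 1 ≤ vba)]
      rw [hv]; ring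
    rwa [hc] at this
  have d3 : a ≠ b := hab
  have d4 : a ≠ b - 1 := fun h => hbnS1 (h ▸ haS)
  have d5 : a - 1 ≠ b := fun h => hbS (h ▸ hbS1)
  have d6 : a - 1 ≠ b - 1 := by
    intro h
    exact hab (by linear_combination h)
  -- assemble
  have hsub : ({a, a - 1, b, b - 1} : Finset (ZMod n)) ⊆ xset S 2 := by
    intro x hx
    simp only [Finset.mem_insert, Finset.mem_singleton] at hx
    rcases hx with rfl | rfl | rfl | rfl
    · exact mema
    · exact mema1
    · exact memb
    · exact memb1
  have hcard : ({a, a - 1, b, b - 1} : Finset (ZMod n)).card = 4 := by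
    rw [Finset.card_insert_of_notMem (by simp [d1, d3, d4]),
      Finset.card_insert_of_notMem (by simp [d5, d6]),
      Finset.card_insert_of_notMem (by simp [d2])]
    simp
  calc 4 = ({a, a - 1, b, b - 1} : Finset (ZMod n)).card := hcard.symm
    _ ≤ (xset S 2).card := Finset.card_le_card hsub


lemma one_stab_of_out1_empty {S : Finset (ZMod n)} (h : outS S 1 = ∅) :
    (1 : ZMod n) ∈ stab S := by
  classical
  have hall : ∀ i ∈ S, i + 1 ∈ S := by
    intro i hi
    by_contra hnot
    have : i ∈ outS S 1 := by
      simp only [outS, Finset.mem_filter, Nat.cast_one]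
      exact ⟨hi, hnot⟩
    rw [h] at this
    exact absurd this (Finset.notMem_empty _)
  have hsub : S.image (fun i => i + (1 : ZMod n)) ⊆ S := by
    intro j hj
    simp only [Finset.mem_image] at hj
    obtain ⟨i, hi, rfl⟩ := hj
    exact hall i hi
  have heq : S.image (fun i => i + (1 : ZMod n)) = S :=
    Finset.eq_of_subset_of_card_le hsub
      (Finset.card_image_of_injective _ (add_left_injective _)).ge
  intro i
  constructor
  · exact fun hi => hall i hi
  · intro hi
    rw [← heq] at hi
    simp only [Finset.mem_image] at hi
    obtain ⟨j, hj, hji⟩ := hi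
    have : j = i := by
      have := hji
      exact add_right_cancel this
    rwa [← this]

lemma one_stab_of_in1_empty {S : Finset (ZMod n)} (h : inS S 1 = ∅) :
    (1 : ZMod n) ∈ stab S := by
  classical
  have hall : ∀ i, i + 1 ∈ S → i ∈ S := by
    intro i hi
    by_contra hnot
    have : i ∈ inS S 1 := by
      simp only [inS, Finset.mem_filter, Finset.mem_compl, Nat.cast_one]
      exact ⟨hnot, hi⟩
    rw [h] at this
    exact absurd this (Finset.notMem_empty _)
  have hsub : S.image (fun i => i - (1 : ZMod n)) ⊆ S := by
    intro j hj
    simp only [Finset.mem_image] at hj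
    obtain ⟨i, hi, rfl⟩ := hj
    exact hall _ (by simpa using hi)
  have heq : S.image (fun i => i - (1 : ZMod n)) = S :=
    Finset.eq_of_subset_of_card_le hsub
      (Finset.card_image_of_injective _ sub_left_injective).ge
  intro i
  constructor
  · intro hi
    by_contra hnot
    rw [← heq] at hi
    simp only [Finset.mem_image] at hi
    obtain ⟨j, hj, hji⟩ := hi
    have : j = i + 1 := by linear_combination hji
    rw [this] at hj
    exact hnot hj
  · exact fun hi => hall i hi

lemma stab_nontrivial {S : Finset (ZMod n)} (hS : S.Nonempty) (hS' : S ≠ Finset.univ)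
    (h : (1 : ZMod n) ∈ stab S) : False := by
  rcases stab_one_trivial h with h1 | h1
  · rw [h1] at hS; exact absurd hS (by simp)
  · exact hS' h1

lemma out1_nonempty {S : Finset (ZMod n)} (hS : S.Nonempty) (hS' : S ≠ Finset.univ) :
    (outS S 1).Nonempty := by
  rw [Finset.nonempty_iff_ne_empty]
  intro h
  exact stab_nontrivial hS hS' (one_stab_of_out1_empty h)

lemma in1_nonempty {S : Finset (ZMod n)} (hS : S.Nonempty) (hS' : S ≠ Finset.univ) :
    (inS S 1).Nonempty := by
  rw [Finset.nonempty_iff_ne_empty]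
  intro h
  exact stab_nontrivial hS hS' (one_stab_of_in1_empty h)

lemma periodic_xset1_card {S : Finset (ZMod n)} (hS : S.Nonempty) (hS' : S ≠ Finset.univ)
    {g : ℕ} (hg : 0 < g) (hgn : g ∣ n) (hstab : ((g : ℕ) : ZMod n) ∈ stab S) :
    2 * (n / g) ≤ (xset S 1).card := by
  classical
  have houtinv : ∀ i ∈ outS S 1, i + ((g : ℕ) : ZMod n) ∈ outS S 1 := by
    intro i hi
    simp only [outS, Finset.mem_filter, Nat.cast_one] at hi ⊢
    refine ⟨(hstab i).1 hi.1, fun hmem => hi.2 ?_⟩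
    have : i + (g : ZMod n) + 1 = i + 1 + (g : ZMod n) := by ring
    rw [this] at hmem
    exact (hstab (i + 1)).2 hmem
  have hininv : ∀ i ∈ inS S 1, i + ((g : ℕ) : ZMod n) ∈ inS S 1 := by
    intro i hi
    simp only [inS, Finset.mem_filter, Finset.mem_compl, Nat.cast_one] at hi ⊢
    refine ⟨fun hmem => hi.1 ((hstab i).2 hmem), ?_⟩
    have : i + (g : ZMod n) + 1 = i + 1 + (g : ZMod n) := by ring
    rw [this]
    exact (hstab (i + 1)).1 hi.2
  obtain ⟨a, ha⟩ := out1_nonempty hS hS'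
  obtain ⟨b, hb⟩ := in1_nonempty hS hS'
  have h1 : n / g ≤ (outS S 1).card := orbit_card_le hg hgn houtinv ha
  have h2 : n / g ≤ (inS S 1).card := orbit_card_le hg hgn hininv hb
  have h3 : (xset S 1).card = (outS S 1).card + (inS S 1).card := by
    rw [xset_eq_union, Finset.card_union_of_disjoint (disj_out_in S 1)]
  omega

lemma stab_finset_gcd {S : Finset (ZMod n)} (K : Finset ℕ)
    (h : ∀ k ∈ K, ((k : ℕ) : ZMod n) ∈ stab S) :
    ((K.gcd id : ℕ) : ZMod n) ∈ stab S := by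
  classical
  induction K using Finset.induction_on with
  | empty => simpa using (stab S).zero_mem
  | insert a s hnotmem ih =>
    rw [Finset.gcd_insert]
    have ha := h a (Finset.mem_insert_self a s)
    have hs := ih (fun k hk => h k (Finset.mem_insert_of_mem hk))
    have : GCDMonoid.gcd a (s.gcd id) = Nat.gcd a (s.gcd id) := rfl
    rw [id_eq] at *
    rw [this]
    exact stab_gcd ha hs

/-- Periodic case: if some `xset S k` with `1 ≤ k ≤ r` is empty, the total cut is large. -/
lemma periodic_total (hr : 2 ≤ r) (h2 : 4 * r < n) {S : Finset (ZMod n)}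
    (hS : S.Nonempty) (hS' : S ≠ Finset.univ)
    (hK : ∃ k ∈ Finset.Icc 1 r, xset S k = ∅) :
    2 * r + 2 ≤ ∑ k ∈ Finset.Icc 1 r, (xset S k).card := by
  classical
  set K₀ := (Finset.Icc 1 r).filter (fun k => xset S k = ∅) with hK₀
  obtain ⟨k₀, hk₀mem, hk₀⟩ := hK
  have hk₀K : k₀ ∈ K₀ := by rw [hK₀]; exact Finset.mem_filter.2 ⟨hk₀mem, hk₀⟩
  have hstab0 : ∀ k ∈ K₀, ((k : ℕ) : ZMod n) ∈ stab S := by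
    intro k hk
    rw [hK₀, Finset.mem_filter] at hk
    rw [mem_stab]
    exact xset_empty_iff.1 hk.2
  set g := Nat.gcd n (K₀.gcd id) with hg
  have hgn : g ∣ n := Nat.gcd_dvd_left _ _
  have hstabg : ((g : ℕ) : ZMod n) ∈ stab S := by
    rw [hg]
    have h1 : ((n : ℕ) : ZMod n) ∈ stab S := by
      rw [ZMod.natCast_self]; exact (stab S).zero_mem
    exact stab_gcd h1 (stab_finset_gcd K₀ hstab0)
  have hgk : ∀ k ∈ K₀, g ∣ k := by
    intro k hk
    exact (Nat.gcd_dvd_right n _).trans (Finset.gcd_dvd hk)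
  have hk₀1 : 1 ≤ k₀ ∧ k₀ ≤ r := by
    rw [Finset.mem_Icc] at hk₀mem; exact hk₀mem
  have hgpos : 0 < g := by
    rw [hg]
    exact Nat.gcd_pos_of_pos_left _ (by omega)
  have hgr : g ≤ r := le_trans (Nat.le_of_dvd (by omega) (hgk k₀ hk₀K)) hk₀1.2
  have hg2 : 2 ≤ g := by
    rcases Nat.lt_or_ge g 2 with h | h
    · exfalso
      have hg1 : g = 1 := by omega
      apply stab_nontrivial hS hS'
      have := hstabg
      rw [hg1] at this
      simpa using this
    · exact h
  have hK₀sub : K₀ ⊆ (Finset.Ioc 0 r).filter (g ∣ ·) := by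
    intro k hk
    have h1 := hgk k hk
    rw [hK₀, Finset.mem_filter, Finset.mem_Icc] at hk
    rw [Finset.mem_filter, Finset.mem_Ioc]
    exact ⟨⟨by omega, hk.1.2⟩, h1⟩
  have hK₀card : K₀.card ≤ r / g := by
    have := Finset.card_le_card hK₀sub
    rwa [Nat.Ioc_filter_dvd_card_eq_div] at this
  have hrg1 : 1 ≤ r / g := (Nat.one_le_div_iff (by omega)).2 hgr
  have hng : 4 * (r / g) ≤ n / g := by
    have h1 : (r / g) * g ≤ r := Nat.div_mul_le_self r g
    have h3 : 4 * (r / g) * g ≤ 4 * r := by nlinarith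
    rw [Nat.le_div_iff_mul_le (by omega)]
    omega
  have hone_not : (1 : ℕ) ∉ K₀ := by
    intro h1
    have := hgk 1 h1
    have := Nat.le_of_dvd Nat.one_pos this
    omega
  -- split the sum
  have hf1 : 2 * (n / g) ≤ (xset S 1).card :=
    periodic_xset1_card hS hS' hgpos hgn hstabg
  have hsplit : insert 1 ((Finset.Icc 2 r) \ K₀) ⊆ Finset.Icc 1 r := by
    intro k hk
    rcases Finset.mem_insert.1 hk with rfl | hk
    · rw [Finset.mem_Icc]; omega
    · have := (Finset.mem_sdiff.1 hk).1
      rw [Finset.mem_Icc] at this ⊢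
      omega
  have hsum1 : ∑ k ∈ insert 1 ((Finset.Icc 2 r) \ K₀), (xset S k).card ≤
      ∑ k ∈ Finset.Icc 1 r, (xset S k).card :=
    Finset.sum_le_sum_of_subset hsplit
  have h1notin : (1 : ℕ) ∉ (Finset.Icc 2 r) \ K₀ := by
    intro h
    have := (Finset.mem_sdiff.1 h).1
    rw [Finset.mem_Icc] at this
    omega
  rw [Finset.sum_insert h1notin] at hsum1
  have hlow : ∀ k ∈ (Finset.Icc 2 r) \ K₀, 2 ≤ (xset S k).card := by
    intro k hk
    rw [Finset.mem_sdiff] at hk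
    apply two_le_card_xset
    intro hemp
    exact hk.2 (by
      rw [hK₀, Finset.mem_filter]
      refine ⟨?_, hemp⟩
      have := hk.1
      rw [Finset.mem_Icc] at this ⊢
      omega)
  have hsum2 : 2 * ((Finset.Icc 2 r) \ K₀).card ≤
      ∑ k ∈ (Finset.Icc 2 r) \ K₀, (xset S k).card := by
    calc 2 * ((Finset.Icc 2 r) \ K₀).card
        = ∑ _k ∈ (Finset.Icc 2 r) \ K₀, 2 := by simp [Finset.sum_const, mul_comm]
      _ ≤ _ := Finset.sum_le_sum hlow
  have hcard_sdiff : (Finset.Icc 2 r).card - K₀.card ≤ ((Finset.Icc 2 r) \ K₀).card :=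
    Finset.le_card_sdiff _ _
  have hicc2 : (Finset.Icc 2 r).card = r - 1 := by
    rw [Nat.card_Icc]
    omega
  generalize hP : r / g = P at hK₀card hrg1 hng
  generalize hQ : n / g = Q at hf1 hng
  omega

lemma total_ge_base (hr : 2 ≤ r) (h2 : 4 * r < n) {S : Finset (ZMod n)}
    (hS : S.Nonempty) (hS' : S ≠ Finset.univ) :
    2 * r ≤ ∑ k ∈ Finset.Icc 1 r, (xset S k).card := by
  by_cases hK : ∃ k ∈ Finset.Icc 1 r, xset S k = ∅
  · have := periodic_total hr h2 hS hS' hK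
    omega
  · push_neg at hK
    have hall : ∀ k ∈ Finset.Icc 1 r, 2 ≤ (xset S k).card :=
      fun k hk => two_le_card_xset (hK k hk).ne_empty
    have hsum : ∑ _k ∈ Finset.Icc 1 r, 2 ≤ ∑ k ∈ Finset.Icc 1 r, (xset S k).card :=
      Finset.sum_le_sum hall
    rw [Finset.sum_const, smul_eq_mul, Nat.card_Icc] at hsum
    omega

lemma total_ge_refined (hr : 2 ≤ r) (h2 : 4 * r < n) (h1 : n < 8 * r) {S : Finset (ZMod n)}
    (hc2 : 2 ≤ S.card) (hc2' : S.card ≤ n - 2) :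
    2 * r + 2 ≤ ∑ k ∈ Finset.Icc 1 r, (xset S k).card := by
  classical
  have hn9 : 8 < n := by omega
  have hS : S.Nonempty := Finset.card_pos.1 (by omega)
  have hS' : S ≠ Finset.univ := by
    intro h
    rw [h, Finset.card_univ, ZMod.card] at hc2'
    omega
  by_cases hK : ∃ k ∈ Finset.Icc 1 r, xset S k = ∅
  · exact periodic_total hr h2 hS hS' hK
  · push_neg at hK
    have hall : ∀ k ∈ Finset.Icc 1 r, 2 ≤ (xset S k).card :=
      fun k hk => two_le_card_xset (hK k hk).ne_empty
    by_cases h4 : 4 ≤ (xset S 1).card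
    · -- f1 ≥ 4
      have hins : Finset.Icc 1 r = insert 1 (Finset.Icc 2 r) := by
        ext k
        simp only [Finset.mem_Icc, Finset.mem_insert]
        omega
      have h1n : (1 : ℕ) ∉ Finset.Icc 2 r := by simp
      rw [hins, Finset.sum_insert h1n]
      have hrest : ∑ _k ∈ Finset.Icc 2 r, 2 ≤ ∑ k ∈ Finset.Icc 2 r, (xset S k).card := by
        apply Finset.sum_le_sum
        intro k hk
        apply hall
        rw [Finset.mem_Icc] at hk ⊢
        omega
      rw [Finset.sum_const, smul_eq_mul, Nat.card_Icc] at hrest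
      omega
    · -- f1 = 2
      have hf1ne := hK 1 (by rw [Finset.mem_Icc]; omega)
      have h2le := two_le_card_xset hf1ne.ne_empty
      have heven := card_xset_eq S 1
      have hf1 : (xset S 1).card = 2 := by omega
      have hout1 : (outS S 1).card = 1 := by omega
      have hin1 : (inS S 1).card = 1 := by
        rw [← card_out_eq_in]; omega
      obtain ⟨a, ha⟩ := Finset.card_eq_one.1 hout1
      obtain ⟨b, hb⟩ := Finset.card_eq_one.1 hin1
      have haS : a ∈ S ∧ a + 1 ∉ S := by
        have : a ∈ outS S 1 := ha ▸ Finset.mem_singleton_self a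
        simpa [outS] using this
      have hbS : b ∉ S ∧ b + 1 ∈ S := by
        have : b ∈ inS S 1 := hb ▸ Finset.mem_singleton_self b
        simpa [inS] using this
      have hOut : ∀ i, i ∈ S → i + 1 ∉ S → i = a := by
        intro i hi hi1
        have : i ∈ outS S 1 := by simp [outS, hi, hi1]
        rw [ha, Finset.mem_singleton] at this
        exact this
      have hIn : ∀ i, i ∉ S → i + 1 ∈ S → i = b := by
        intro i hi hi1
        have : i ∈ inS S 1 := by simp [inS, hi, hi1]
        rw [hb, Finset.mem_singleton] at this
        exact this
      have hf2 : 4 ≤ (xset S 2).card :=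
        four_le_xset2 hn9 hc2 hc2' haS.1 haS.2 hbS.1 hbS.2 hOut hIn
      have hins : Finset.Icc 1 r = insert 1 (insert 2 (Finset.Icc 3 r)) := by
        ext k
        simp only [Finset.mem_Icc, Finset.mem_insert]
        omega
      have h1n : (1 : ℕ) ∉ insert 2 (Finset.Icc 3 r) := by simp
      have h2n : (2 : ℕ) ∉ Finset.Icc 3 r := by simp
      rw [hins, Finset.sum_insert h1n, Finset.sum_insert h2n]
      have hrest : ∑ _k ∈ Finset.Icc 3 r, 2 ≤ ∑ k ∈ Finset.Icc 3 r, (xset S k).card := by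
        apply Finset.sum_le_sum
        intro k hk
        apply hall
        rw [Finset.mem_Icc] at hk ⊢
        omega
      rw [Finset.sum_const, smul_eq_mul, Nat.card_Icc] at hrest
      omega

/-- Cut edges at distance `k`. -/
def cutE (S : Finset (ZMod n)) (k : ℕ) : Finset (Sym2 (ZMod n)) :=
  (xset S k).image (fun i => s(i, i + (k : ZMod n)))

/-- All cut edges of `S` in the circulant graph. -/
def cutF (r' : ℕ) (S : Finset (ZMod n)) : Finset (Sym2 (ZMod n)) :=
  (Finset.Icc 1 r').biUnion (fun k => cutE S k)

lemma card_cutE (h2 : 4 * r < n) {S : Finset (ZMod n)} {k : ℕ} (hk1 : 1 ≤ k) (hkr : k ≤ r) :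
    (cutE S k).card = (xset S k).card := by
  apply Finset.card_image_of_injOn
  intro i hi j hj hij
  exact (edge_repr_unique h2 hk1 hkr hk1 hkr hij).1

lemma card_cutF (h2 : 4 * r < n) (S : Finset (ZMod n)) :
    (cutF r S).card = ∑ k ∈ Finset.Icc 1 r, (xset S k).card := by
  rw [cutF, Finset.card_biUnion]
  · apply Finset.sum_congr rfl
    intro k hk
    rw [Finset.mem_Icc] at hk
    exact card_cutE h2 hk.1 hk.2
  · intro k hk l hl hkl
    rw [Finset.mem_coe, Finset.mem_Icc] at hk hl
    show Disjoint (cutE S k) (cutE S l)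
    rw [Finset.disjoint_left]
    intro e he hel
    simp only [cutE, Finset.mem_image] at he hel
    obtain ⟨i, hi, rfl⟩ := he
    obtain ⟨j, hj, hle⟩ := hel
    exact hkl (edge_repr_unique h2 hk.1 hk.2 hl.1 hl.2 hle.symm).2

lemma mem_cutF {S : Finset (ZMod n)} {e : Sym2 (ZMod n)} :
    e ∈ cutF r S ↔ ∃ k : ℕ, 1 ≤ k ∧ k ≤ r ∧ ∃ i ∈ xset S k, e = s(i, i + (k : ZMod n)) := by
  simp only [cutF, cutE, Finset.mem_biUnion, Finset.mem_Icc, Finset.mem_image]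
  constructor
  · rintro ⟨k, ⟨h1, h2⟩, i, hi, rfl⟩
    exact ⟨k, h1, h2, i, hi, rfl⟩
  · rintro ⟨k, h1, h2, i, hi, rfl⟩
    exact ⟨k, ⟨h1, h2⟩, i, hi, rfl⟩

lemma cutF_mem_edgeSet (h2 : 4 * r < n) {S : Finset (ZMod n)} {e : Sym2 (ZMod n)}
    (he : e ∈ cutF r S) : e ∈ (circulant n r).edgeSet := by
  rw [mem_cutF] at he
  obtain ⟨k, h1, hk, i, hi, rfl⟩ := he
  exact adj_shift h2 h1 hk i

lemma cutF_cross {S : Finset (ZMod n)} {e : Sym2 (ZMod n)} (he : e ∈ cutF r S) :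
    ∃ x y : ZMod n, e = s(x, y) ∧ x ∈ S ∧ y ∉ S := by
  rw [mem_cutF] at he
  obtain ⟨k, h1, hk, i, hi, rfl⟩ := he
  rw [mem_xset] at hi
  by_cases hiS : i ∈ S
  · exact ⟨i, i + (k : ZMod n), rfl, hiS, fun h => hi ⟨fun _ => h, fun _ => hiS⟩⟩
  · refine ⟨i + (k : ZMod n), i, Sym2.eq_swap, ?_, hiS⟩
    by_contra h
    exact hi ⟨fun h' => absurd h' hiS, fun h' => absurd h' h⟩

lemma cross_mem_cutF (h2 : 4 * r < n) {S : Finset (ZMod n)} {i j : ZMod n}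
    (hadj : (circulant n r).Adj i j) (hcross : ¬ (i ∈ S ↔ j ∈ S)) :
    s(i, j) ∈ cutF r S := by
  rw [adj_iff h2] at hadj
  obtain ⟨k, h1, hk, hd | hd⟩ := hadj
  · -- i - j = k, so i = j + k
    rw [mem_cutF]
    refine ⟨k, h1, hk, j, ?_, ?_⟩
    · rw [mem_xset]
      intro h
      have hij : j + (k : ZMod n) = i := by linear_combination -hd
      rw [hij] at h
      exact hcross (h.symm)
    · have hij : j + (k : ZMod n) = i := by linear_combination -hd
      rw [hij, Sym2.eq_swap]
  · rw [mem_cutF]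
    refine ⟨k, h1, hk, i, ?_, ?_⟩
    · rw [mem_xset]
      intro h
      have hij : i + (k : ZMod n) = j := by linear_combination -hd
      rw [hij] at h
      exact hcross h
    · have hij : i + (k : ZMod n) = j := by linear_combination -hd
      rw [hij]

lemma xset_singleton (h2 : 4 * r < n) {k : ℕ} (hk1 : 1 ≤ k) (hkr : k ≤ r) (v : ZMod n) :
    xset {v} k = {v, v - (k : ZMod n)} := by
  have hn : 0 < n := by omega
  have hkne : (k : ZMod n) ≠ 0 := cast_ne_zero hn hk1 (by omega)
  ext i
  rw [mem_xset]
  simp only [Finset.mem_singleton, Finset.mem_insert]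
  constructor
  · intro h
    by_cases hiv : i = v
    · exact Or.inl hiv
    · right
      by_contra hikv
      apply h
      constructor
      · intro h'; exact absurd h' hiv
      · intro h'
        exact absurd (by linear_combination h' : i = v - (k : ZMod n)) hikv
  · rintro (rfl | rfl)
    · intro h
      have := h.1 rfl
      exact hkne (by linear_combination this)
    · intro h
      have : v - (k : ZMod n) + (k : ZMod n) = v := by ring
      rw [this] at h
      have := h.2 rfl
      exact hkne (by linear_combination -this)

lemma card_cutF_singleton (h2 : 4 * r < n) (v : ZMod n) :
    (cutF r {v}).card = 2 * r := by
  rw [card_cutF h2]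
  have : ∀ k ∈ Finset.Icc 1 r, (xset ({v} : Finset (ZMod n)) k).card = 2 := by
    intro k hk
    rw [Finset.mem_Icc] at hk
    rw [xset_singleton h2 hk.1 hk.2 v]
    rw [Finset.card_insert_of_notMem, Finset.card_singleton]
    rw [Finset.mem_singleton]
    intro h
    have hn : 0 < n := by omega
    exact cast_ne_zero hn hk.1 (by omega) (by linear_combination h)
  rw [Finset.sum_congr rfl this, Finset.sum_const, smul_eq_mul, Nat.card_Icc]
  omega

lemma mem_cutF_singleton_endpoint {v : ZMod n} {e : Sym2 (ZMod n)}
    (he : e ∈ cutF r ({v} : Finset (ZMod n))) : v ∈ e := by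
  obtain ⟨x, y, rfl, hx, hy⟩ := cutF_cross he
  rw [Finset.mem_singleton] at hx
  rw [Sym2.mem_iff]
  exact Or.inl hx.symm

lemma adj_mem_cutF_singleton (h2 : 4 * r < n) {v w : ZMod n}
    (hadj : (circulant n r).Adj v w) : s(v, w) ∈ cutF r ({v} : Finset (ZMod n)) := by
  apply cross_mem_cutF h2 hadj
  intro h
  have := h.1 (Finset.mem_singleton_self v)
  rw [Finset.mem_singleton] at this
  exact hadj.ne this.symm

/-- Edges of the circulant crossing the boundary of the support of a component of the
deleted graph all lie in `D`. -/
lemma comp_cut_subset (h2 : 4 * r < n) {D : Finset (Sym2 (ZMod n))}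
    {c : ((circulant n r).deleteEdges ↑D).ConnectedComponent} {S : Finset (ZMod n)}
    (hS : ∀ i, i ∈ S ↔ i ∈ c.supp) : cutF r S ⊆ D := by
  intro e he
  by_contra heD
  obtain ⟨x, y, rfl, hx, hy⟩ := cutF_cross he
  have hadj : ((circulant n r).deleteEdges ↑D).Adj x y := by
    rw [SimpleGraph.deleteEdges_adj]
    refine ⟨cutF_mem_edgeSet h2 he, ?_⟩
    rwa [Finset.mem_coe]
  have hxc : ((circulant n r).deleteEdges ↑D).connectedComponentMk x = c :=
    (SimpleGraph.ConnectedComponent.mem_supp_iff _ _).1 ((hS x).1 hx)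
  have hyc : ((circulant n r).deleteEdges ↑D).connectedComponentMk y = c := by
    rw [← SimpleGraph.ConnectedComponent.connectedComponentMk_eq_of_adj hadj]
    exact hxc
  exact hy ((hS y).2 ((SimpleGraph.ConnectedComponent.mem_supp_iff _ _).2 hyc))

/-- `badOf e` is the set of `i` such that `e` is one of the edges of the triangle at `i`. -/
def badOf (e : Sym2 (ZMod n)) : Finset (ZMod n) :=
  Finset.univ.filter (fun i =>
    e = s(i, i + ((1 : ℕ) : ZMod n)) ∨
    e = s(i + ((1 : ℕ) : ZMod n), i + ((2 : ℕ) : ZMod n)) ∨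
    e = s(i, i + ((2 : ℕ) : ZMod n)))

lemma card_badOf (hr : 2 ≤ r) (h2 : 4 * r < n) {e : Sym2 (ZMod n)}
    (he : e ∈ (circulant n r).edgeSet) : (badOf e).card ≤ 2 := by
  obtain ⟨i₀, k, hk1, hkr, rfl⟩ := edge_repr h2 he
  have hsub : badOf (s(i₀, i₀ + (k : ZMod n))) ⊆ {i₀, i₀ - 1} := by
    intro i hi
    simp only [badOf, Finset.mem_filter, Finset.mem_univ, true_and] at hi
    simp only [Finset.mem_insert, Finset.mem_singleton]
    rcases hi with h | h | h
    · exact Or.inl (edge_repr_unique h2 hk1 hkr (le_refl 1) (by omega) h).1.symm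
    · have h' : s(i₀, i₀ + (k : ZMod n)) = s(i + ((1:ℕ) : ZMod n),
          (i + ((1:ℕ) : ZMod n)) + ((1:ℕ) : ZMod n)) := by
        rw [h]
        congr 1
        push_cast
        ring
      have := (edge_repr_unique h2 hk1 hkr (le_refl 1) (by omega) h').1
      right
      push_cast at this
      linear_combination -this
    · exact Or.inl (edge_repr_unique h2 hk1 hkr (by omega) (by omega) h).1.symm
  calc (badOf (s(i₀, i₀ + (k : ZMod n)))).card ≤ ({i₀, i₀ - 1} : Finset (ZMod n)).card :=
        Finset.card_le_card hsub
    _ ≤ 2 := by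
        apply le_trans (Finset.card_insert_le _ _)
        simp

lemma exists_triangle (hr : 2 ≤ r) (h2 : 4 * r < n) {D : Finset (Sym2 (ZMod n))}
    (hD : ↑D ⊆ (circulant n r).edgeSet) (hcard : D.card ≤ 2 * r) :
    ∃ i : ZMod n, s(i, i + ((1:ℕ) : ZMod n)) ∉ D ∧
      s(i + ((1:ℕ) : ZMod n), i + ((2:ℕ) : ZMod n)) ∉ D ∧
      s(i, i + ((2:ℕ) : ZMod n)) ∉ D := by
  classical
  set Bad := D.biUnion badOf with hBad
  have hBadCard : Bad.card ≤ 2 * D.card := by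
    calc Bad.card ≤ ∑ e ∈ D, (badOf e).card := Finset.card_biUnion_le
      _ ≤ ∑ _e ∈ D, 2 := Finset.sum_le_sum (fun e heD =>
          card_badOf hr h2 (hD (Finset.mem_coe.2 heD)))
      _ = 2 * D.card := by rw [Finset.sum_const, smul_eq_mul]; ring
  have hlt : Bad.card < Fintype.card (ZMod n) := by
    rw [ZMod.card]
    omega
  have : Badᶜ.Nonempty := by
    rw [← Finset.card_pos, Finset.card_compl]
    omega
  obtain ⟨i, hi⟩ := this
  rw [Finset.mem_compl] at hi
  refine ⟨i, ?_, ?_, ?_⟩ <;>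
  · intro hmem
    apply hi
    rw [hBad, Finset.mem_biUnion]
    refine ⟨_, hmem, ?_⟩
    simp [badOf]

lemma fin2_pigeonhole {a b c : Fin 2} (hab : a ≠ b) (hbc : b ≠ c) (hac : a ≠ c) : False := by
  fin_cases a <;> fin_cases b <;> fin_cases c <;> simp_all

lemma comp_not_colorable {V : Type*} {H : SimpleGraph V} {x y z : V}
    (hxy : H.Adj x y) (hyz : H.Adj y z) (hxz : H.Adj x z) :
    ¬ (H.induce (H.connectedComponentMk x).supp).Colorable 2 := by
  intro hcol
  obtain ⟨C⟩ := hcol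
  have hx : x ∈ (H.connectedComponentMk x).supp :=
    (SimpleGraph.ConnectedComponent.mem_supp_iff _ _).2 rfl
  have hy : y ∈ (H.connectedComponentMk x).supp :=
    (SimpleGraph.ConnectedComponent.mem_supp_iff _ _).2
      (SimpleGraph.ConnectedComponent.connectedComponentMk_eq_of_adj hxy).symm
  have hz : z ∈ (H.connectedComponentMk x).supp :=
    (SimpleGraph.ConnectedComponent.mem_supp_iff _ _).2
      (SimpleGraph.ConnectedComponent.connectedComponentMk_eq_of_adj hxz).symm
  have h1 : (H.induce (H.connectedComponentMk x).supp).Adj ⟨x, hx⟩ ⟨y, hy⟩ := by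
    simp [SimpleGraph.comap_adj, hxy]
  have h2 : (H.induce (H.connectedComponentMk x).supp).Adj ⟨y, hy⟩ ⟨z, hz⟩ := by
    simp [SimpleGraph.comap_adj, hyz]
  have h3 : (H.induce (H.connectedComponentMk x).supp).Adj ⟨x, hx⟩ ⟨z, hz⟩ := by
    simp [SimpleGraph.comap_adj, hxz]
  exact fin2_pigeonhole (C.valid h1) (C.valid h2) (C.valid h3)

lemma xset_compl (S : Finset (ZMod n)) (k : ℕ) : xset Sᶜ k = xset S k := by
  ext i
  rw [mem_xset, mem_xset, Finset.mem_compl, Finset.mem_compl]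
  tauto

lemma cutF_compl (S : Finset (ZMod n)) : cutF r Sᶜ = cutF r S := by
  simp only [cutF, cutE, xset_compl]

lemma decodable_small (hr : 2 ≤ r) (h2 : 4 * r < n) {D : Finset (Sym2 (ZMod n))}
    (hD : ↑D ⊆ (circulant n r).edgeSet) (hcard : D.card < 2 * r) :
    OddDecodable ((circulant n r).deleteEdges ↑D) := by
  classical
  set H := (circulant n r).deleteEdges ↑D with hH
  intro c hcol
  set S : Finset (ZMod n) := Finset.univ.filter (· ∈ c.supp) with hSdef
  have hS : ∀ i, i ∈ S ↔ i ∈ c.supp := by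
    intro i; simp [hSdef]
  have hSne : S.Nonempty := by
    obtain ⟨w, hw⟩ := c.exists_rep
    exact ⟨w, (hS w).2 ((SimpleGraph.ConnectedComponent.mem_supp_iff _ _).2 hw)⟩
  have hcut := comp_cut_subset h2 (c := c) hS
  by_cases hSuniv : S = Finset.univ
  · -- the deleted graph is connected on this component: find a triangle
    obtain ⟨i, he1, he2, he3⟩ := exists_triangle hr h2 hD (by omega)
    have hG1 : (circulant n r).Adj i (i + ((1:ℕ) : ZMod n)) := adj_shift h2 le_rfl (by omega) i
    have hG2 : (circulant n r).Adj (i + ((1:ℕ) : ZMod n)) (i + ((2:ℕ) : ZMod n)) := by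
      have := adj_shift h2 le_rfl (by omega : 1 ≤ r) (i + ((1:ℕ) : ZMod n))
      have heq : i + ((1:ℕ) : ZMod n) + ((1:ℕ) : ZMod n) = i + ((2:ℕ) : ZMod n) := by
        push_cast; ring
      rwa [heq] at this
    have hG3 : (circulant n r).Adj i (i + ((2:ℕ) : ZMod n)) :=
      adj_shift h2 (by omega) (by omega) i
    have hH1 : H.Adj i (i + ((1:ℕ) : ZMod n)) := by
      rw [hH, SimpleGraph.deleteEdges_adj]
      exact ⟨hG1, fun h => he1 (Finset.mem_coe.1 h)⟩
    have hH2 : H.Adj (i + ((1:ℕ) : ZMod n)) (i + ((2:ℕ) : ZMod n)) := by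
      rw [hH, SimpleGraph.deleteEdges_adj]
      exact ⟨hG2, fun h => he2 (Finset.mem_coe.1 h)⟩
    have hH3 : H.Adj i (i + ((2:ℕ) : ZMod n)) := by
      rw [hH, SimpleGraph.deleteEdges_adj]
      exact ⟨hG3, fun h => he3 (Finset.mem_coe.1 h)⟩
    have hic : H.connectedComponentMk i = c := by
      apply (SimpleGraph.ConnectedComponent.mem_supp_iff _ _).1
      exact (hS i).1 (hSuniv ▸ Finset.mem_univ i)
    rw [← hic] at hcol
    exact comp_not_colorable hH1 hH2 hH3 hcol
  · have hbase := total_ge_base hr h2 hSne hSuniv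
    have hle : (cutF r S).card ≤ D.card := Finset.card_le_card hcut
    rw [card_cutF h2] at hle
    omega

lemma classify (hr : 2 ≤ r) (h2 : 4 * r < n) (h1 : n < 8 * r) {D : Finset (Sym2 (ZMod n))}
    (hD : ↑D ⊆ (circulant n r).edgeSet) (hcard : D.card = 2 * r)
    (hundec : ¬ OddDecodable ((circulant n r).deleteEdges ↑D)) :
    ∃ v : ZMod n, D = cutF r {v} := by
  classical
  set H := (circulant n r).deleteEdges ↑D with hH
  simp only [OddDecodable, not_forall, not_not] at hundec
  obtain ⟨c, hcol⟩ := hundec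
  set S : Finset (ZMod n) := Finset.univ.filter (· ∈ c.supp) with hSdef
  have hS : ∀ i, i ∈ S ↔ i ∈ c.supp := by
    intro i; simp [hSdef]
  have hSne : S.Nonempty := by
    obtain ⟨w, hw⟩ := c.exists_rep
    exact ⟨w, (hS w).2 ((SimpleGraph.ConnectedComponent.mem_supp_iff _ _).2 hw)⟩
  have hcut := comp_cut_subset h2 (c := c) hS
  -- find a surviving triangle; its component is not 2-colorable
  obtain ⟨i, he1, he2, he3⟩ := exists_triangle hr h2 hD (by omega)
  have hG1 : (circulant n r).Adj i (i + ((1:ℕ) : ZMod n)) := adj_shift h2 le_rfl (by omega) i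
  have hG2 : (circulant n r).Adj (i + ((1:ℕ) : ZMod n)) (i + ((2:ℕ) : ZMod n)) := by
    have := adj_shift h2 le_rfl (by omega : 1 ≤ r) (i + ((1:ℕ) : ZMod n))
    have heq : i + ((1:ℕ) : ZMod n) + ((1:ℕ) : ZMod n) = i + ((2:ℕ) : ZMod n) := by
      push_cast; ring
    rwa [heq] at this
  have hG3 : (circulant n r).Adj i (i + ((2:ℕ) : ZMod n)) :=
    adj_shift h2 (by omega) (by omega) i
  have hH1 : H.Adj i (i + ((1:ℕ) : ZMod n)) := by
    rw [hH, SimpleGraph.deleteEdges_adj]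
    exact ⟨hG1, fun h => he1 (Finset.mem_coe.1 h)⟩
  have hH2 : H.Adj (i + ((1:ℕ) : ZMod n)) (i + ((2:ℕ) : ZMod n)) := by
    rw [hH, SimpleGraph.deleteEdges_adj]
    exact ⟨hG2, fun h => he2 (Finset.mem_coe.1 h)⟩
  have hH3 : H.Adj i (i + ((2:ℕ) : ZMod n)) := by
    rw [hH, SimpleGraph.deleteEdges_adj]
    exact ⟨hG3, fun h => he3 (Finset.mem_coe.1 h)⟩
  have hSuniv : S ≠ Finset.univ := by
    intro hSuniv
    have hic : H.connectedComponentMk i = c := by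
      apply (SimpleGraph.ConnectedComponent.mem_supp_iff _ _).1
      exact (hS i).1 (hSuniv ▸ Finset.mem_univ i)
    rw [← hic] at hcol
    exact comp_not_colorable hH1 hH2 hH3 hcol
  -- cardinality constraints
  have hlt : S.card < n := by
    have hssub : S ⊂ Finset.univ := Finset.ssubset_univ_iff.2 hSuniv
    have := Finset.card_lt_card hssub
    rwa [Finset.card_univ, ZMod.card] at this
  have hpos : 1 ≤ S.card := Finset.card_pos.2 hSne
  have hle : (cutF r S).card ≤ D.card := Finset.card_le_card hcut
  rw [card_cutF h2] at hle
  have hnotmid : ¬ (2 ≤ S.card ∧ S.card ≤ n - 2) := by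
    rintro ⟨ha, hb⟩
    have := total_ge_refined hr h2 h1 ha hb
    omega
  rcases (by omega : S.card = 1 ∨ S.card = n - 1) with hc1 | hc1
  · obtain ⟨v, hv⟩ := Finset.card_eq_one.1 hc1
    refine ⟨v, ?_⟩
    rw [hv] at hcut
    apply (Finset.eq_of_subset_of_card_le hcut ?_).symm
    rw [card_cutF_singleton h2, hcard]
  · have hcc : Sᶜ.card = 1 := by
      rw [Finset.card_compl, ZMod.card]
      omega
    obtain ⟨v, hv⟩ := Finset.card_eq_one.1 hcc
    refine ⟨v, ?_⟩
    have hcut' : cutF r {v} ⊆ D := by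
      rw [← hv, cutF_compl]
      exact hcut
    apply (Finset.eq_of_subset_of_card_le hcut' ?_).symm
    rw [card_cutF_singleton h2, hcard]

lemma star_undecodable (hr : 2 ≤ r) (h2 : 4 * r < n) (v : ZMod n) :
    ¬ OddDecodable ((circulant n r).deleteEdges ↑(cutF r ({v} : Finset (ZMod n)))) := by
  classical
  set H := (circulant n r).deleteEdges ↑(cutF r ({v} : Finset (ZMod n))) with hH
  have hiso : ∀ w, ¬ H.Adj v w := by
    intro w hadj
    rw [hH, SimpleGraph.deleteEdges_adj] at hadj
    exact hadj.2 (Finset.mem_coe.2 (adj_mem_cutF_singleton h2 hadj.1))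
  have hsupp : (H.connectedComponentMk v).supp = {v} := by
    ext u
    simp only [SimpleGraph.ConnectedComponent.mem_supp_iff, Set.mem_singleton_iff,
      SimpleGraph.ConnectedComponent.eq]
    constructor
    · intro hreach
      obtain ⟨p⟩ := hreach.symm
      cases p with
      | nil => rfl
      | cons hadj q => exact absurd hadj (hiso _)
    · rintro rfl
      rfl
  intro hdec
  apply hdec (H.connectedComponentMk v)
  refine ⟨SimpleGraph.Coloring.mk (fun _ => 0) ?_⟩
  rintro ⟨a, ha⟩ ⟨b, hb⟩ hadj
  rw [hsupp] at ha hb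
  rw [Set.mem_singleton_iff] at ha hb
  exfalso
  have : a = b := by rw [ha, hb]
  exact (hadj.ne (by simpa using this)).elim

lemma cutF_singleton_sub_edgeSet (h2 : 4 * r < n) (v : ZMod n) :
    ↑(cutF r ({v} : Finset (ZMod n))) ⊆ (circulant n r).edgeSet := by
  intro e he
  exact cutF_mem_edgeSet h2 (Finset.mem_coe.1 he)

lemma cutF_singleton_inj (hr : 2 ≤ r) (h2 : 4 * r < n) {v w : ZMod n}
    (heq : cutF r ({v} : Finset (ZMod n)) = cutF r ({w} : Finset (ZMod n))) : v = w := by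
  have hn : 0 < n := by omega
  by_contra hne
  have hadj1 : (circulant n r).Adj v (v + ((1:ℕ) : ZMod n)) :=
    adj_shift h2 le_rfl (by omega) v
  have hadj2 : (circulant n r).Adj v (v - ((1:ℕ) : ZMod n)) := by
    rw [adj_iff h2]
    exact ⟨1, le_rfl, by omega, Or.inl (by ring)⟩
  have hm1 : s(v, v + ((1:ℕ) : ZMod n)) ∈ cutF r ({w} : Finset (ZMod n)) := by
    rw [← heq]
    exact adj_mem_cutF_singleton h2 hadj1
  have hm2 : s(v, v - ((1:ℕ) : ZMod n)) ∈ cutF r ({w} : Finset (ZMod n)) := by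
    rw [← heq]
    exact adj_mem_cutF_singleton h2 hadj2
  have hw1 := mem_cutF_singleton_endpoint hm1
  have hw2 := mem_cutF_singleton_endpoint hm2
  rw [Sym2.mem_iff] at hw1 hw2
  rcases hw1 with h | hwv1
  · exact hne h.symm
  rcases hw2 with h | hwv2
  · exact hne h.symm
  have hz : ((2:ℕ) : ZMod n) = 0 := by
    have h := hwv1.symm.trans hwv2
    push_cast at h ⊢
    linear_combination h
  exact cast_ne_zero hn (by omega) (by omega) hz

lemma count_2r (hr : 2 ≤ r) (h2 : 4 * r < n) (h1 : n < 8 * r) :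
    uG (circulant n r) (2 * r) = n := by
  classical
  rw [uG]
  have hbij : Function.Bijective (fun v : ZMod n =>
      (⟨cutF r {v}, cutF_singleton_sub_edgeSet h2 v, card_cutF_singleton h2 v,
        star_undecodable hr h2 v⟩ :
        {D : Finset (Sym2 (ZMod n)) // ↑D ⊆ (circulant n r).edgeSet ∧ D.card = 2 * r ∧
          ¬ OddDecodable ((circulant n r).deleteEdges ↑D)})) := by
    constructor
    · intro v w hvw
      exact cutF_singleton_inj hr h2 (Subtype.ext_iff.1 hvw)
    · rintro ⟨D, hDe, hDc, hDu⟩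
      obtain ⟨v, hv⟩ := classify hr h2 h1 hDe hDc hDu
      exact ⟨v, Subtype.ext hv.symm⟩
  exact (Nat.card_eq_of_bijective _ hbij).symm.trans (Nat.card_zmod n)

lemma uG_zero (hr : 2 ≤ r) (h2 : 4 * r < n) {x : ℕ} (hx : x < 2 * r) :
    uG (circulant n r) x = 0 := by
  rw [uG]
  have : IsEmpty {D : Finset (Sym2 (ZMod n)) //
      ↑D ⊆ (circulant n r).edgeSet ∧ D.card = x ∧
        ¬ OddDecodable ((circulant n r).deleteEdges ↑D)} := by
    constructor
    rintro ⟨D, hDe, hDc, hDu⟩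
    exact hDu (decodable_small hr h2 hDe (by omega))
  exact Nat.card_of_isEmpty

end WithNeZero





end CircAux

/-- For `r ≥ 2` and `n/2 < 4r < n`, the circulant graph
`G = C_n(1, …, r)` satisfies (with decodability in the `q` odd sense): the minimum degree
of `G` is `2r`, `b_G = 2r`, and `u_{2r} = n`. -/
theorem circulant_minDegree_bCut_uCount (n r : ℕ) (hr : 2 ≤ r)
    (h1 : n < 8 * r) (h2 : 4 * r < n) :
    (⨅ v : ZMod n, Nat.card {w : ZMod n // (circulant n r).Adj v w}) = 2 * r ∧
      bCut (circulant n r) = 2 * r ∧ uG (circulant n r) (2 * r) = n := by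
  haveI : NeZero n := ⟨by omega⟩
  haveI : Nonempty (ZMod n) := ⟨0⟩
  have hdeg : (⨅ v : ZMod n, Nat.card {w : ZMod n // (circulant n r).Adj v w}) = 2 * r := by
    have h := CircAux.degree_eq (n := n) (r := r) h2 (by omega)
    simp_rw [h]
    exact ciInf_const
  have hcount := CircAux.count_2r (n := n) hr h2 h1
  refine ⟨hdeg, ?_, hcount⟩
  have hmem : 2 * r ∈ {x : ℕ | 0 < uG (circulant n r) x} := by
    rw [Set.mem_setOf_eq, hcount]; omega
  apply le_antisymm
  · exact Nat.sInf_le hmem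
  · apply le_csInf ⟨2 * r, hmem⟩
    intro x hx
    by_contra hlt
    push_neg at hlt
    rw [Set.mem_setOf_eq, CircAux.uG_zero hr h2 hlt] at hx
    exact lt_irrefl 0 hx
end

section
/- Let n and r be integers with r ≥ 2 and n/2 < 4r < n, and let G be the circulant graph C_n(1,…,r) on vertex set ZMod n. If D is a set of edges of G with |D| ≤ 2r such that the spanning subgraph with edge set E(G) \ D is disconnected, then D is exactly the set of 2r edges incident with some single vertex. In particular, for every subset U ⊆ ZMod n with 2 ≤ |U| ≤ n − 2, the number of edges of G with exactly one endpoint in U is strictly greater than 2r. -/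
open Finset

/-! ### Auxiliary lemmas -/

lemma zmodCast_inj {n a b : ℕ} (ha : a < n) (hb : b < n)
    (h : (a : ZMod n) = (b : ZMod n)) : a = b := by
  haveI : NeZero n := ⟨by omega⟩
  have h2 := congrArg ZMod.val h
  rwa [ZMod.val_cast_of_lt ha, ZMod.val_cast_of_lt hb] at h2

lemma zmodCast_ne_zero {n a : ℕ} (h0 : 0 < a) (h1 : a < n) : (a : ZMod n) ≠ 0 := by
  intro h
  have hd : n ∣ a := (ZMod.natCast_eq_zero_iff a n).1 h
  have := Nat.le_of_dvd h0 hd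
  omega

/-- The number of `i ∈ U` with `i + c ∉ U`. -/
def fc (n : ℕ) (U : Finset (ZMod n)) (c : ZMod n) : ℕ :=
  (U.filter (fun i => i + c ∉ U)).card

lemma fc_zero (n : ℕ) (U : Finset (ZMod n)) : fc n U 0 = 0 := by
  simp [fc, Finset.filter_eq_empty_iff]

lemma fc_neg (n : ℕ) (U : Finset (ZMod n)) (c : ZMod n) : fc n U (-c) = fc n U c := by
  classical
  have key : (U.filter fun i => i + c ∈ U).card = (U.filter fun i => i + (-c) ∈ U).card := by
    apply Finset.card_nbij (fun x => x + c)
    · intro x hx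
      simp only [Finset.coe_filter, Set.mem_setOf_eq] at hx ⊢
      refine ⟨hx.2, ?_⟩
      have : x + c + -c = x := by ring
      rw [this]; exact hx.1
    · intro x _ y _ h
      exact add_right_cancel h
    · intro y hy
      simp only [Finset.coe_filter, Set.mem_setOf_eq] at hy
      refine ⟨y + -c, ?_, by ring⟩
      simp only [Finset.coe_filter, Set.mem_setOf_eq]
      refine ⟨hy.2, ?_⟩
      have : y + -c + c = y := by ring
      rw [this]; exact hy.1
  have h1 := Finset.card_filter_add_card_filter_not (s := U)
    (p := fun i => i + c ∈ U)
  have h2 := Finset.card_filter_add_card_filter_not (s := U)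
    (p := fun i => i + (-c) ∈ U)
  unfold fc
  beta_reduce at h1 h2
  omega

lemma fc_sum_all (n : ℕ) [NeZero n] (U : Finset (ZMod n)) :
    ∑ c : ZMod n, fc n U c = U.card * Uᶜ.card := by
  classical
  unfold fc
  have h1 : ∀ c : ZMod n, (U.filter fun i => i + c ∉ U).card
      = ∑ i ∈ U, if i + c ∉ U then 1 else 0 := by
    intro c; rw [Finset.card_filter]
  simp_rw [h1]
  rw [Finset.sum_comm]
  have h2 : ∀ i : ZMod n, (∑ c : ZMod n, if i + c ∉ U then 1 else 0) = Uᶜ.card := by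
    intro i
    rw [← Finset.card_filter]
    apply Finset.card_nbij (fun c => i + c)
    · intro c hc
      simp only [Finset.coe_filter, Set.mem_setOf_eq] at hc
      exact Finset.mem_compl.2 hc.2
    · intro x _ y _ h
      exact add_left_cancel h
    · intro y hy
      simp only [Finset.coe_compl, Set.mem_compl_iff, Finset.mem_coe] at hy
      refine ⟨y - i, ?_, by ring⟩
      simp only [Finset.coe_filter, Set.mem_setOf_eq]
      refine ⟨Finset.mem_univ _, ?_⟩
      have : i + (y - i) = y := by ring
      rw [this]; exact hy
  simp_rw [h2]
  rw [Finset.sum_const, smul_eq_mul]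

lemma fc_period (n : ℕ) (U : Finset (ZMod n)) (x c : ZMod n)
    (h : ∀ i, i + c ∈ U ↔ i ∈ U) : fc n U (x + c) = fc n U x := by
  unfold fc
  congr 1
  apply Finset.filter_congr
  intro i _
  rw [show i + (x + c) = (i + x) + c from by ring]
  exact not_congr (h (i + x))

lemma mem_add_iff (n : ℕ) (U : Finset (ZMod n)) (c : ZMod n)
    (h : ∀ i ∈ U, i + c ∈ U) : ∀ i, i + c ∈ U ↔ i ∈ U := by
  have himg : U.image (fun x => x + c) = U := by
    apply Finset.eq_of_subset_of_card_le
    · intro j hj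
      obtain ⟨x, hx, rfl⟩ := Finset.mem_image.1 hj
      exact h x hx
    · rw [Finset.card_image_of_injective _ (add_left_injective c)]
  intro i
  constructor
  · intro hic
    have h2 : i + c ∈ U.image (fun x => x + c) := by rw [himg]; exact hic
    obtain ⟨x, hx, hxe⟩ := Finset.mem_image.1 h2
    have : x = i := add_right_cancel hxe
    rwa [this] at hx
  · exact h i

lemma mem_zsmul (n : ℕ) (U : Finset (ZMod n)) (c : ZMod n)
    (h : ∀ i, i + c ∈ U ↔ i ∈ U) :
    ∀ (z : ℤ) (i : ZMod n), i + z • c ∈ U ↔ i ∈ U := by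
  intro z
  induction z using Int.induction_on with
  | zero => simp
  | succ k ih =>
      intro i
      have e : i + ((k : ℤ) + 1) • c = (i + (k : ℤ) • c) + c := by
        rw [add_smul, one_smul]; ring
      rw [e, h, ih]
  | pred k ih =>
      intro i
      have e : i + (-(k : ℤ) - 1) • c = (i + -c) + (-(k : ℤ)) • c := by
        rw [sub_smul, one_smul]; ring
      rw [e, ih]
      have h' := h (i + -c)
      rw [show (i + -c) + c = i from by ring] at h'
      exact h'.symm

lemma orbit_card (n : ℕ) [NeZero n] (d q : ℕ) (hd : 0 < d) (hnq : n = d * q)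
    (W : Finset (ZMod n)) (hcl : ∀ i ∈ W, i + (d : ZMod n) ∈ W) (w : ZMod n)
    (hw : w ∈ W) : q ≤ W.card := by
  classical
  have hmem : ∀ t : ℕ, w + ((t * d : ℕ) : ZMod n) ∈ W := by
    intro t
    induction t with
    | zero => simpa using hw
    | succ t ih =>
        have e : (((t + 1) * d : ℕ) : ZMod n) = ((t * d : ℕ) : ZMod n) + (d : ZMod n) := by
          push_cast; ring
        rw [e, ← add_assoc]
        exact hcl _ ih
  have hinj : Set.InjOn (fun t : ℕ => w + ((t * d : ℕ) : ZMod n)) ↑(Finset.range q) := by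
    intro t1 h1 t2 h2 he
    simp only [Finset.coe_range, Set.mem_Iio] at h1 h2
    have he2 : ((t1 * d : ℕ) : ZMod n) = ((t2 * d : ℕ) : ZMod n) := add_left_cancel he
    have hb1 : t1 * d < n := by
      rw [hnq, mul_comm d q]
      exact Nat.mul_lt_mul_of_lt_of_le h1 le_rfl hd
    have hb2 : t2 * d < n := by
      rw [hnq, mul_comm d q]
      exact Nat.mul_lt_mul_of_lt_of_le h2 le_rfl hd
    have := zmodCast_inj hb1 hb2 he2
    exact Nat.eq_of_mul_eq_mul_right hd this
  calc q = ((Finset.range q).image fun t => w + ((t * d : ℕ) : ZMod n)).card := by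
        rw [Finset.card_image_of_injOn hinj, Finset.card_range]
    _ ≤ W.card := by
        apply Finset.card_le_card
        intro x hx
        obtain ⟨t, _, rfl⟩ := Finset.mem_image.1 hx
        exact hmem t

/-! ### The invariant case -/

lemma sum_fc_invariant (n r : ℕ) (hr : 2 ≤ r) (h2 : 4 * r < n) (U : Finset (ZMod n))
    (hm2 : 2 ≤ U.card) (hmn : U.card ≤ n - 2) (k : ℕ) (hk1 : 1 ≤ k) (hkr : k ≤ r)
    (hfk : fc n U (k : ZMod n) = 0) :
    r + 1 ≤ ∑ j ∈ Finset.Icc 1 r, fc n U (j : ZMod n) := by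
  classical
  haveI : NeZero n := ⟨by omega⟩
  have hclk : ∀ i ∈ U, i + (k : ZMod n) ∈ U := by
    intro i hi
    by_contra hni
    have hmem : i ∈ U.filter (fun i => i + (k : ZMod n) ∉ U) :=
      Finset.mem_filter.2 ⟨hi, hni⟩
    have hpos : 0 < fc n U (k : ZMod n) := Finset.card_pos.2 ⟨i, hmem⟩
    omega
  have hiffk := mem_add_iff n U _ hclk
  set d := Nat.gcd k n with hd
  have hdvd : d ∣ n := Nat.gcd_dvd_right k n
  have hdk : d ≤ k := Nat.gcd_le_left n (by omega)
  have hdpos : 0 < d := Nat.gcd_pos_of_pos_left n (by omega)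
  have hzk : ∃ z : ℤ, (d : ZMod n) = z • (k : ZMod n) := by
    refine ⟨Nat.gcdA k n, ?_⟩
    have hg := Nat.gcd_eq_gcd_ab k n
    have h1 : ((d : ℤ) : ZMod n) = (d : ZMod n) := by push_cast; rfl
    rw [← h1, hg]
    push_cast
    simp [ZMod.natCast_self, zsmul_eq_mul]
    ring
  obtain ⟨z, hz⟩ := hzk
  have hiffd : ∀ i, i + (d : ZMod n) ∈ U ↔ i ∈ U := by
    intro i; rw [hz]; exact mem_zsmul n U _ hiffk z i
  have hd2 : 2 ≤ d := by
    by_contra hlt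
    have hd1 : d = 1 := by omega
    have h1 : ∀ i, i + (1 : ZMod n) ∈ U ↔ i ∈ U := by
      intro i
      have := hiffd i
      rwa [hd1, Nat.cast_one] at this
    obtain ⟨u, hu⟩ : U.Nonempty := Finset.card_pos.1 (by omega)
    have hall : ∀ t : ℕ, u + (t : ZMod n) ∈ U := by
      intro t
      induction t with
      | zero => simpa using hu
      | succ t ih =>
          have e : ((t + 1 : ℕ) : ZMod n) = (t : ZMod n) + 1 := by push_cast; ring
          rw [e, ← add_assoc]
          exact (h1 _).2 ih
    have huniv : U = Finset.univ := by
      refine Finset.eq_univ_of_forall (fun x => ?_)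
      have h1' := hall (x - u).val
      have h2' : (((x - u).val : ℕ) : ZMod n) = x - u := ZMod.natCast_rightInverse _
      rw [h2', show u + (x - u) = x from by ring] at h1'
      exact h1'
    have : U.card = n := by rw [huniv, Finset.card_univ, ZMod.card]
    omega
  set q := n / d with hq
  have hnq : n = d * q := (Nat.mul_div_cancel' hdvd).symm
  have hn0 : 0 < n := by omega
  have hqpos : 0 < q := by
    rcases Nat.eq_zero_or_pos q with h | h
    · rw [h, mul_zero] at hnq; omega
    · exact h
  obtain ⟨u, hu⟩ : U.Nonempty := Finset.card_pos.1 (by omega)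
  have hUq : q ≤ U.card :=
    orbit_card n d q hdpos hnq U (fun i hi => (hiffd i).2 hi) u hu
  have hcompl : Uᶜ.card = n - U.card := by
    rw [Finset.card_compl, ZMod.card]
  obtain ⟨v, hv⟩ : (Uᶜ : Finset (ZMod n)).Nonempty := Finset.card_pos.1 (by omega)
  have hUcq : q ≤ Uᶜ.card := by
    apply orbit_card n d q hdpos hnq Uᶜ _ v hv
    intro i hi
    rw [Finset.mem_compl] at hi ⊢
    intro hcon
    exact hi ((hiffd i).1 hcon)
  have htot : ∑ c : ZMod n, fc n U c = U.card * Uᶜ.card := fc_sum_all n U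
  have hre : ∑ c : ZMod n, fc n U c = ∑ j ∈ Finset.range n, fc n U ((j : ℕ) : ZMod n) := by
    apply Finset.sum_nbij' (fun c => ZMod.val c) (fun a => ((a : ℕ) : ZMod n))
    · intro a _
      exact Finset.mem_range.2 (ZMod.val_lt a)
    · intro a _
      exact Finset.mem_univ _
    · intro a _
      exact ZMod.natCast_rightInverse a
    · intro a ha
      exact ZMod.val_cast_of_lt (Finset.mem_range.1 ha)
    · intro a _
      rw [ZMod.natCast_rightInverse a]
  have hper : ∀ (a b : ℕ), fc n U ((b + d * a : ℕ) : ZMod n) = fc n U ((b : ℕ) : ZMod n) := by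
    intro a
    induction a with
    | zero => simp
    | succ a ih =>
        intro b
        have e : ((b + d * (a + 1) : ℕ) : ZMod n)
            = ((b + d * a : ℕ) : ZMod n) + (d : ZMod n) := by push_cast; ring
        rw [e, fc_period n U _ _ hiffd, ih]
  have hfold : ∑ j ∈ Finset.range n, fc n U ((j : ℕ) : ZMod n)
      = q * ∑ b ∈ Finset.range d, fc n U ((b : ℕ) : ZMod n) := by
    have e1 : ∑ j ∈ Finset.range n, fc n U ((j : ℕ) : ZMod n)
        = ∑ p ∈ Finset.range q ×ˢ Finset.range d,
            fc n U ((p.2 + d * p.1 : ℕ) : ZMod n) := by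
      apply Finset.sum_nbij' (fun jj => (jj / d, jj % d)) (fun p => p.2 + d * p.1)
      · intro a ha
        rw [Finset.mem_range] at ha
        rw [Finset.mem_product, Finset.mem_range, Finset.mem_range]
        constructor
        · have : a < q * d := by rw [mul_comm q d, ← hnq]; exact ha
          exact Nat.div_lt_iff_lt_mul hdpos |>.2 this
        · exact Nat.mod_lt _ hdpos
      · intro p hp
        rw [Finset.mem_product, Finset.mem_range, Finset.mem_range] at hp
        rw [Finset.mem_range]
        have h3 : d * p.1 + d ≤ d * q := by
          calc d * p.1 + d = d * (p.1 + 1) := by ring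
            _ ≤ d * q := Nat.mul_le_mul_left d (by omega)
        omega
      · intro a _
        exact Nat.mod_add_div a d
      · intro p hp
        rw [Finset.mem_product, Finset.mem_range, Finset.mem_range] at hp
        have hfst : (p.2 + d * p.1) / d = p.1 := by
          rw [Nat.add_mul_div_left _ _ hdpos, Nat.div_eq_of_lt hp.2]
          omega
        have hsnd : (p.2 + d * p.1) % d = p.2 := by
          rw [Nat.add_mul_mod_self_left, Nat.mod_eq_of_lt hp.2]
        exact Prod.ext hfst hsnd
      · intro a _
        rw [Nat.mod_add_div a d]
    rw [e1, Finset.sum_product]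
    simp_rw [hper]
    rw [Finset.sum_const, Finset.card_range, smul_eq_mul]
  have hmax : 2 * r + 1 ≤ U.card ∨ 2 * r + 1 ≤ Uᶜ.card := by omega
  have hprod : q * (2 * r + 1) ≤ U.card * Uᶜ.card := by
    rcases hmax with h | h
    · calc q * (2 * r + 1) ≤ Uᶜ.card * U.card := Nat.mul_le_mul hUcq h
        _ = U.card * Uᶜ.card := mul_comm _ _
    · exact Nat.mul_le_mul hUq h
  have hsum_d : 2 * r + 1 ≤ ∑ b ∈ Finset.range d, fc n U ((b : ℕ) : ZMod n) := by
    have hle : q * (2 * r + 1) ≤ q * ∑ b ∈ Finset.range d, fc n U ((b : ℕ) : ZMod n) := by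
      rw [← hfold, ← hre, htot]
      exact hprod
    exact Nat.le_of_mul_le_mul_left hle hqpos
  have hzero : fc n U ((0 : ℕ) : ZMod n) = 0 := by
    rw [Nat.cast_zero]; exact fc_zero n U
  have hsub : (Finset.range d).erase 0 ⊆ Finset.Icc 1 r := by
    intro j hj
    rw [Finset.mem_erase, Finset.mem_range] at hj
    rw [Finset.mem_Icc]
    omega
  calc r + 1 ≤ 2 * r + 1 := by omega
    _ ≤ ∑ b ∈ Finset.range d, fc n U ((b : ℕ) : ZMod n) := hsum_d
    _ = ∑ b ∈ (Finset.range d).erase 0, fc n U ((b : ℕ) : ZMod n) := by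
        rw [← Finset.sum_erase_add (Finset.range d) _
          (Finset.mem_range.2 (by omega : 0 < d)), hzero, add_zero]
    _ ≤ ∑ j ∈ Finset.Icc 1 r, fc n U ((j : ℕ) : ZMod n) :=
        Finset.sum_le_sum_of_subset hsub

/-! ### The arc case -/

lemma arc_fc2 (n : ℕ) (hn : 3 ≤ n) (U : Finset (ZMod n)) (hm2 : 2 ≤ U.card)
    (hmn : U.card ≤ n - 2) (hf1 : fc n U 1 = 1) : 2 ≤ fc n U 2 := by
  classical
  haveI : NeZero n := ⟨by omega⟩
  unfold fc at hf1
  obtain ⟨i0, hi0⟩ := Finset.card_eq_one.1 hf1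
  have hi0mem : i0 ∈ U ∧ i0 + 1 ∉ U := by
    have : i0 ∈ U.filter (fun i => i + (1 : ZMod n) ∉ U) := by
      rw [hi0]; exact Finset.mem_singleton_self i0
    simpa [Finset.mem_filter] using this
  have hfneg : (U.filter (fun i => i + (-1 : ZMod n) ∉ U)).card = 1 := by
    have h := fc_neg n U (1 : ZMod n)
    unfold fc at h
    rw [h]; exact hf1
  obtain ⟨j0, hj0⟩ := Finset.card_eq_one.1 hfneg
  have huniqL : ∀ i ∈ U, i + (-1 : ZMod n) ∉ U → i = j0 := by
    intro i hi hni
    have : i ∈ U.filter (fun i => i + (-1 : ZMod n) ∉ U) := Finset.mem_filter.2 ⟨hi, hni⟩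
    rw [hj0] at this
    exact Finset.mem_singleton.1 this
  have hA : i0 + 2 ∉ U := by
    intro hA
    have hj0e : j0 = i0 + 2 := by
      have h1 : (i0 + 2) + (-1 : ZMod n) ∉ U := by
        rw [show (i0 + 2) + (-1 : ZMod n) = i0 + 1 from by ring]
        exact hi0mem.2
      exact (huniqL _ hA h1).symm
    have hchain : ∀ t : ℕ, t ≤ n - 3 → i0 - (t : ZMod n) ∈ U := by
      intro t
      induction t with
      | zero => intro _; simpa using hi0mem.1
      | succ t ih =>
          intro ht
          have h1 : i0 - (t : ZMod n) ∈ U := ih (by omega)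
          by_contra hne
          have h3 : (i0 - (t : ZMod n)) + (-1 : ZMod n) ∉ U := by
            rw [show (i0 - (t : ZMod n)) + (-1 : ZMod n)
                = i0 - ((t + 1 : ℕ) : ZMod n) from by push_cast; ring]
            exact hne
          have h4 : i0 - (t : ZMod n) = j0 := huniqL _ h1 h3
          rw [hj0e] at h4
          have h5 : ((t + 2 : ℕ) : ZMod n) = 0 := by push_cast; linear_combination -h4
          have h6 : n ∣ t + 2 := (ZMod.natCast_eq_zero_iff _ _).1 h5
          have := Nat.le_of_dvd (by omega) h6
          omega
    have himg : ((Finset.range (n - 2)).image (fun t : ℕ => i0 - (t : ZMod n))) ⊆ U := by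
      intro x hx
      obtain ⟨t, ht, rfl⟩ := Finset.mem_image.1 hx
      rw [Finset.mem_range] at ht
      exact hchain t (by omega)
    have hcard : ((Finset.range (n - 2)).image (fun t : ℕ => i0 - (t : ZMod n))).card
        = n - 2 := by
      rw [Finset.card_image_of_injOn, Finset.card_range]
      intro a ha b hb he
      simp only [Finset.coe_range, Set.mem_Iio] at ha hb
      have h5 : (a : ZMod n) = (b : ZMod n) := by linear_combination -he
      exact zmodCast_inj (by omega) (by omega) h5
    have hnotmem : i0 + 2 ∉ (Finset.range (n - 2)).image (fun t : ℕ => i0 - (t : ZMod n)) := by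
      intro hmem
      obtain ⟨t, ht, he⟩ := Finset.mem_image.1 hmem
      rw [Finset.mem_range] at ht
      have h5 : ((t + 2 : ℕ) : ZMod n) = 0 := by push_cast; linear_combination -he
      have h6 := (ZMod.natCast_eq_zero_iff _ _).1 h5
      have := Nat.le_of_dvd (by omega) h6
      omega
    have hfin : n - 1 ≤ U.card := by
      have hsub2 : insert (i0 + 2)
          ((Finset.range (n - 2)).image fun t : ℕ => i0 - (t : ZMod n)) ⊆ U := by
        intro x hx
        rcases Finset.mem_insert.1 hx with rfl | hx
        · exact hA
        · exact himg hx
      have hc := Finset.card_le_card hsub2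
      rw [Finset.card_insert_of_notMem hnotmem, hcard] at hc
      omega
    omega
  have hB : i0 - 1 ∈ U := by
    by_contra hB
    have hj0i : j0 = i0 := by
      have h : i0 + (-1 : ZMod n) ∉ U := by
        rw [show i0 + (-1 : ZMod n) = i0 - 1 from by ring]; exact hB
      exact (huniqL i0 hi0mem.1 h).symm
    obtain ⟨j, hjU, hji⟩ : ∃ j ∈ U, j ≠ i0 := by
      obtain ⟨j, hj, hne⟩ := Finset.exists_mem_ne (s := U) (by omega) i0
      exact ⟨j, hj, hne⟩
    set s0 := (j - i0).val with hs0def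
    have hs0n : s0 < n := ZMod.val_lt _
    have hs0pos : 0 < s0 := by
      rcases Nat.eq_zero_or_pos s0 with h0 | h0
      · exfalso
        have : j - i0 = 0 := by
          have := ZMod.val_eq_zero (j - i0)
          rw [← hs0def] at this
          exact this.1 h0
        exact hji (by linear_combination this)
      · exact h0
    have hjs : j = i0 + ((s0 : ℕ) : ZMod n) := by
      have h1 : ((s0 : ℕ) : ZMod n) = j - i0 := by
        rw [hs0def]; exact ZMod.natCast_rightInverse _
      rw [h1]; ring
    have hchain : ∀ t : ℕ, t ≤ s0 - 1 → j - (t : ZMod n) ∈ U := by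
      intro t
      induction t with
      | zero => intro _; simpa using hjU
      | succ t ih =>
          intro ht
          have h1 : j - (t : ZMod n) ∈ U := ih (by omega)
          by_contra hne
          have h3 : (j - (t : ZMod n)) + (-1 : ZMod n) ∉ U := by
            rw [show (j - (t : ZMod n)) + (-1 : ZMod n)
                = j - ((t + 1 : ℕ) : ZMod n) from by push_cast; ring]
            exact hne
          have h4 : j - (t : ZMod n) = j0 := huniqL _ h1 h3
          rw [hj0i, hjs] at h4
          have h5 : ((t : ℕ) : ZMod n) = ((s0 : ℕ) : ZMod n) := by linear_combination -h4
          have h6 : t = s0 := zmodCast_inj (by omega) hs0n h5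
          omega
    have hfin := hchain (s0 - 1) le_rfl
    have he : j - ((s0 - 1 : ℕ) : ZMod n) = i0 + 1 := by
      have hc : ((s0 - 1 : ℕ) : ZMod n) = ((s0 : ℕ) : ZMod n) - 1 := by
        have e : s0 - 1 + 1 = s0 := by omega
        calc ((s0 - 1 : ℕ) : ZMod n) = ((s0 - 1 + 1 : ℕ) : ZMod n) - 1 := by push_cast; ring
          _ = ((s0 : ℕ) : ZMod n) - 1 := by rw [e]
      rw [hjs, hc]; ring
    rw [he] at hfin
    exact hi0mem.2 hfin
  have hpair : ({i0 - 1, i0} : Finset (ZMod n)) ⊆ U.filter (fun i => i + (2 : ZMod n) ∉ U) := by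
    intro x hx
    rcases Finset.mem_insert.1 hx with rfl | hx
    · refine Finset.mem_filter.2 ⟨hB, ?_⟩
      rw [show (i0 - 1) + (2 : ZMod n) = i0 + 1 from by ring]
      exact hi0mem.2
    · rw [Finset.mem_singleton.1 hx]
      exact Finset.mem_filter.2 ⟨hi0mem.1, hA⟩
  have hne : i0 - 1 ≠ i0 := by
    intro h
    have h1 : ((1 : ℕ) : ZMod n) = 0 := by push_cast; linear_combination -h
    have h6 := (ZMod.natCast_eq_zero_iff _ _).1 h1
    have := Nat.le_of_dvd (by omega) h6
    omega
  unfold fc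
  calc 2 = ({i0 - 1, i0} : Finset (ZMod n)).card := (Finset.card_pair hne).symm
    _ ≤ _ := Finset.card_le_card hpair

/-! ### Combining the cases -/

lemma sum_fc_pos (n r : ℕ) (hr : 2 ≤ r) (h2 : 4 * r < n) (U : Finset (ZMod n))
    (hm2 : 2 ≤ U.card) (hmn : U.card ≤ n - 2)
    (hpos : ∀ k ∈ Finset.Icc 1 r, 1 ≤ fc n U (k : ZMod n)) :
    r + 1 ≤ ∑ j ∈ Finset.Icc 1 r, fc n U (j : ZMod n) := by
  haveI : NeZero n := ⟨by omega⟩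
  rcases le_or_gt 2 (fc n U ((1 : ℕ) : ZMod n)) with hf1 | hf1
  · have hsplit : Finset.Icc 1 r = insert 1 (Finset.Icc 2 r) := by
      ext j; simp only [Finset.mem_Icc, Finset.mem_insert]; omega
    have hnot : (1 : ℕ) ∉ Finset.Icc 2 r := by
      rw [Finset.mem_Icc]; omega
    rw [hsplit, Finset.sum_insert hnot]
    have hcard2 : (Finset.Icc 2 r).card = r - 1 := by rw [Nat.card_Icc]; omega
    have hge : (Finset.Icc 2 r).card ≤ ∑ j ∈ Finset.Icc 2 r, fc n U (j : ZMod n) := by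
      calc (Finset.Icc 2 r).card = ∑ _j ∈ Finset.Icc 2 r, 1 := by
            rw [Finset.sum_const, smul_eq_mul, mul_one]
        _ ≤ _ := Finset.sum_le_sum
            (fun j hj => hpos j (by rw [Finset.mem_Icc] at hj ⊢; omega))
    rw [hcard2] at hge
    omega
  · have hf1e : fc n U ((1 : ℕ) : ZMod n) = 1 := by
      have := hpos 1 (by rw [Finset.mem_Icc]; omega)
      omega
    have hf2 : 2 ≤ fc n U ((2 : ℕ) : ZMod n) := by
      have h := arc_fc2 n (by omega) U hm2 hmn (by rwa [Nat.cast_one] at hf1e)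
      rwa [Nat.cast_ofNat]
    have hsplit : Finset.Icc 1 r = insert 1 (insert 2 (Finset.Icc 3 r)) := by
      ext j; simp only [Finset.mem_Icc, Finset.mem_insert]; omega
    have hnot1 : (1 : ℕ) ∉ insert 2 (Finset.Icc 3 r) := by
      rw [Finset.mem_insert, Finset.mem_Icc]; omega
    have hnot2 : (2 : ℕ) ∉ Finset.Icc 3 r := by
      rw [Finset.mem_Icc]; omega
    rw [hsplit, Finset.sum_insert hnot1, Finset.sum_insert hnot2]
    have hcard3 : (Finset.Icc 3 r).card = r - 2 := by rw [Nat.card_Icc]; omega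
    have hge : (Finset.Icc 3 r).card ≤ ∑ j ∈ Finset.Icc 3 r, fc n U (j : ZMod n) := by
      calc (Finset.Icc 3 r).card = ∑ _j ∈ Finset.Icc 3 r, 1 := by
            rw [Finset.sum_const, smul_eq_mul, mul_one]
        _ ≤ _ := Finset.sum_le_sum
            (fun j hj => hpos j (by rw [Finset.mem_Icc] at hj ⊢; omega))
    rw [hcard3] at hge
    omega

lemma sum_fc_ge (n r : ℕ) (hr : 2 ≤ r) (h2 : 4 * r < n) (U : Finset (ZMod n))
    (hm2 : 2 ≤ U.card) (hmn : U.card ≤ n - 2) :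
    r + 1 ≤ ∑ j ∈ Finset.Icc 1 r, fc n U (j : ZMod n) := by
  by_cases hpos : ∀ k ∈ Finset.Icc 1 r, 1 ≤ fc n U (k : ZMod n)
  · exact sum_fc_pos n r hr h2 U hm2 hmn hpos
  · push_neg at hpos
    obtain ⟨k, hk, hk0⟩ := hpos
    rw [Finset.mem_Icc] at hk
    exact sum_fc_invariant n r hr h2 U hm2 hmn k hk.1 hk.2 (by omega)

lemma circulant_adj_add (n r k : ℕ) (hk1 : 1 ≤ k) (hkr : k ≤ r) (hkn : k < n)
    (i : ZMod n) : (circulant n r).Adj i (i + (k : ZMod n)) := by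
  rw [circulant, SimpleGraph.fromRel_adj]
  constructor
  · intro h
    have h0 : (k : ZMod n) = 0 := by linear_combination -h
    exact zmodCast_ne_zero (by omega) hkn h0
  · exact Or.inr ⟨k, hk1, hkr, by ring⟩

lemma circulant_adj_sub (n r k : ℕ) (hk1 : 1 ≤ k) (hkr : k ≤ r) (hkn : k < n)
    (i : ZMod n) : (circulant n r).Adj (i - (k : ZMod n)) i := by
  rw [circulant, SimpleGraph.fromRel_adj]
  constructor
  · intro h
    have h0 : (k : ZMod n) = 0 := by linear_combination -h
    exact zmodCast_ne_zero (by omega) hkn h0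
  · exact Or.inr ⟨k, hk1, hkr, by ring⟩

/-! ### The cut bound -/

lemma cut_lower (n r : ℕ) (hr : 2 ≤ r) (h2 : 4 * r < n) (U : Finset (ZMod n))
    (hm2 : 2 ≤ U.card) (hmn : U.card ≤ n - 2) :
    2 * r < cutSize (circulant n r) ↑U := by
  classical
  haveI : NeZero n := ⟨by omega⟩
  set t1 : ℕ → Finset (Sym2 (ZMod n)) := fun k =>
    (U.filter (fun i => i + (k : ZMod n) ∉ U)).image (fun i => s(i, i + (k : ZMod n)))
    with ht1
  set t2 : ℕ → Finset (Sym2 (ZMod n)) := fun k =>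
    (U.filter (fun i => i - (k : ZMod n) ∉ U)).image (fun i => s(i - (k : ZMod n), i))
    with ht2
  have hsumcast : ∀ k k' : ℕ, k ∈ Finset.Icc 1 r → k' ∈ Finset.Icc 1 r →
      (k : ZMod n) + (k' : ZMod n) ≠ 0 := by
    intro k k' hk hk' h
    rw [Finset.mem_Icc] at hk hk'
    have h5 : ((k + k' : ℕ) : ZMod n) = 0 := by push_cast; linear_combination h
    have := Nat.le_of_dvd (by omega) ((ZMod.natCast_eq_zero_iff _ _).1 h5)
    omega
  have hcast : ∀ k ∈ Finset.Icc 1 r, ∀ k' ∈ Finset.Icc 1 r,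
      (k : ZMod n) = (k' : ZMod n) → k = k' := by
    intro k hk k' hk' h
    rw [Finset.mem_Icc] at hk hk'
    exact zmodCast_inj (by omega) (by omega) h
  have hc1 : ∀ k ∈ Finset.Icc 1 r, (t1 k).card = fc n U (k : ZMod n) := by
    intro k _
    rw [ht1]
    rw [Finset.card_image_of_injOn]
    · rfl
    · intro a ha b hb he
      simp only [Finset.coe_filter, Set.mem_setOf_eq] at ha hb
      rcases Sym2.eq_iff.1 he with ⟨h1, _⟩ | ⟨h1, h3⟩
      · exact h1
      · exact absurd (by rw [h3]; exact hb.1) ha.2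
  have hc2 : ∀ k ∈ Finset.Icc 1 r, (t2 k).card = fc n U (k : ZMod n) := by
    intro k _
    rw [ht2]
    rw [Finset.card_image_of_injOn]
    · have hfe : U.filter (fun i => i - (k : ZMod n) ∉ U)
          = U.filter (fun i => i + (-(k : ZMod n)) ∉ U) := by
        apply Finset.filter_congr
        intro i _
        rw [sub_eq_add_neg]
      rw [hfe]
      exact fc_neg n U (k : ZMod n)
    · intro a ha b hb he
      simp only [Finset.coe_filter, Set.mem_setOf_eq] at ha hb
      rcases Sym2.eq_iff.1 he with ⟨_, h3⟩ | ⟨h1, h3⟩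
      · exact h3
      · exact absurd (by rw [h1]; exact hb.1) ha.2
  set E1 := (Finset.Icc 1 r).biUnion t1 with hE1
  set E2 := (Finset.Icc 1 r).biUnion t2 with hE2
  have hd1 : ∀ k ∈ Finset.Icc 1 r, ∀ k' ∈ Finset.Icc 1 r, k ≠ k' →
      Disjoint (t1 k) (t1 k') := by
    intro k hk k' hk' hne
    rw [Finset.disjoint_left]
    intro e he he'
    rw [ht1] at he he'
    obtain ⟨a, ha, rfl⟩ := Finset.mem_image.1 he
    obtain ⟨b, hb, hbe⟩ := Finset.mem_image.1 he'
    rw [Finset.mem_filter] at ha hb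
    rcases Sym2.eq_iff.1 hbe with ⟨h1, h3⟩ | ⟨h1, h3⟩
    · apply hne
      apply hcast k hk k' hk'
      rw [h1] at h3
      exact (add_left_cancel h3).symm
    · exact ha.2 (by rw [← h1]; exact hb.1)
  have hd2 : ∀ k ∈ Finset.Icc 1 r, ∀ k' ∈ Finset.Icc 1 r, k ≠ k' →
      Disjoint (t2 k) (t2 k') := by
    intro k hk k' hk' hne
    rw [Finset.disjoint_left]
    intro e he he'
    rw [ht2] at he he'
    obtain ⟨a, ha, rfl⟩ := Finset.mem_image.1 he
    obtain ⟨b, hb, hbe⟩ := Finset.mem_image.1 he'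
    rw [Finset.mem_filter] at ha hb
    rcases Sym2.eq_iff.1 hbe with ⟨h1, h3⟩ | ⟨h1, h3⟩
    · apply hne
      apply hcast k hk k' hk'
      rw [h3] at h1
      have h4 : (k' : ZMod n) = (k : ZMod n) := by linear_combination -h1
      exact h4.symm
    · exact ha.2 (by rw [← h3]; exact hb.1)
  have hd12 : Disjoint E1 E2 := by
    rw [Finset.disjoint_left]
    intro e he1 he2
    rw [hE1] at he1; rw [hE2] at he2
    obtain ⟨k, hk, he1'⟩ := Finset.mem_biUnion.1 he1
    obtain ⟨k', hk', he2'⟩ := Finset.mem_biUnion.1 he2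
    rw [ht1] at he1'; rw [ht2] at he2'
    obtain ⟨a, ha, rfl⟩ := Finset.mem_image.1 he1'
    obtain ⟨b, hb, hbe⟩ := Finset.mem_image.1 he2'
    rw [Finset.mem_filter] at ha hb
    rcases Sym2.eq_iff.1 hbe with ⟨h1, h3⟩ | ⟨h1, h3⟩
    · exact ha.2 (by rw [← h3]; exact hb.1)
    · apply hsumcast k k' hk hk'
      rw [h3] at h1
      linear_combination -h1
  have hsum := sum_fc_ge n r hr h2 U hm2 hmn
  have hcE1 : E1.card = ∑ k ∈ Finset.Icc 1 r, fc n U (k : ZMod n) := by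
    rw [hE1, Finset.card_biUnion hd1]
    exact Finset.sum_congr rfl hc1
  have hcE2 : E2.card = ∑ k ∈ Finset.Icc 1 r, fc n U (k : ZMod n) := by
    rw [hE2, Finset.card_biUnion hd2]
    exact Finset.sum_congr rfl hc2
  have hcardE : 2 * (r + 1) ≤ (E1 ∪ E2).card := by
    rw [Finset.card_union_of_disjoint hd12, hcE1, hcE2]
    omega
  set S : Set (Sym2 (ZMod n)) := {e | e ∈ (circulant n r).edgeSet ∧
    ∃ a b, e = s(a, b) ∧ a ∈ (↑U : Set (ZMod n)) ∧ b ∉ (↑U : Set (ZMod n))} with hS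
  have hsub : (↑(E1 ∪ E2) : Set (Sym2 (ZMod n))) ⊆ S := by
    intro e he
    rw [Finset.coe_union, Set.mem_union] at he
    rcases he with he | he
    · rw [Finset.mem_coe, hE1] at he
      obtain ⟨k, hk, he'⟩ := Finset.mem_biUnion.1 he
      rw [ht1] at he'
      obtain ⟨a, ha, rfl⟩ := Finset.mem_image.1 he'
      rw [Finset.mem_filter] at ha
      rw [Finset.mem_Icc] at hk
      refine ⟨?_, a, a + (k : ZMod n), rfl, by simpa using ha.1, by simpa using ha.2⟩
      rw [SimpleGraph.mem_edgeSet]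
      exact circulant_adj_add n r k hk.1 hk.2 (by omega) a
    · rw [Finset.mem_coe, hE2] at he
      obtain ⟨k, hk, he'⟩ := Finset.mem_biUnion.1 he
      rw [ht2] at he'
      obtain ⟨a, ha, rfl⟩ := Finset.mem_image.1 he'
      rw [Finset.mem_filter] at ha
      rw [Finset.mem_Icc] at hk
      refine ⟨?_, a, a - (k : ZMod n), Sym2.eq_swap, by simpa using ha.1,
        by simpa using ha.2⟩
      rw [SimpleGraph.mem_edgeSet]
      exact circulant_adj_sub n r k hk.1 hk.2 (by omega) a
  have hfinS : S.Finite := Set.toFinite S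
  have h1 : ((↑(E1 ∪ E2) : Set (Sym2 (ZMod n)))).ncard ≤ S.ncard :=
    Set.ncard_le_ncard hsub hfinS
  rw [Set.ncard_coe_finset] at h1
  have h2' : cutSize (circulant n r) ↑U = S.ncard := Nat.card_coe_set_eq S
  omega

/-! ### Degree of the circulant graph -/

lemma circulant_incidence_ncard (n r : ℕ) (hr : 1 ≤ r) (h2 : 4 * r < n) (v : ZMod n) :
    ((circulant n r).incidenceSet v).ncard = 2 * r := by
  classical
  haveI : NeZero n := ⟨by omega⟩
  have he1 : ((circulant n r).incidenceSet v).ncard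
      = Nat.card ((circulant n r).incidenceSet v) := (Nat.card_coe_set_eq _).symm
  have he2 : Nat.card ((circulant n r).incidenceSet v)
      = Nat.card ((circulant n r).neighborSet v) :=
    Nat.card_congr ((circulant n r).incidenceSetEquivNeighborSet v)
  have he3 : Nat.card ((circulant n r).neighborSet v)
      = ((circulant n r).neighborSet v).ncard := Nat.card_coe_set_eq _
  set N : Finset (ZMod n) := (Finset.Icc 1 r).image (fun k : ℕ => v + (k : ZMod n))
    ∪ (Finset.Icc 1 r).image (fun k : ℕ => v - (k : ZMod n)) with hN
  have hNs : (circulant n r).neighborSet v = ↑N := by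
    ext w
    simp only [SimpleGraph.mem_neighborSet, hN, Finset.coe_union, Set.mem_union,
      Finset.coe_image, Set.mem_image, Finset.mem_coe, Finset.mem_Icc]
    constructor
    · intro hadj
      rw [circulant, SimpleGraph.fromRel_adj] at hadj
      obtain ⟨hne, hrel | hrel⟩ := hadj
      · obtain ⟨k, hk1, hkr, he⟩ := hrel
        exact Or.inr ⟨k, ⟨hk1, hkr⟩, by linear_combination he⟩
      · obtain ⟨k, hk1, hkr, he⟩ := hrel
        exact Or.inl ⟨k, ⟨hk1, hkr⟩, by linear_combination -he⟩
    · intro h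
      rcases h with ⟨k, ⟨hk1, hkr⟩, he⟩ | ⟨k, ⟨hk1, hkr⟩, he⟩
      · rw [← he]
        exact circulant_adj_add n r k hk1 hkr (by omega) v
      · rw [← he]
        exact (circulant_adj_sub n r k hk1 hkr (by omega) v).symm
  have hdisj : Disjoint ((Finset.Icc 1 r).image (fun k : ℕ => v + (k : ZMod n)))
      ((Finset.Icc 1 r).image (fun k : ℕ => v - (k : ZMod n))) := by
    rw [Finset.disjoint_left]
    intro x hx hx'
    obtain ⟨k, hk, rfl⟩ := Finset.mem_image.1 hx
    obtain ⟨k', hk', he⟩ := Finset.mem_image.1 hx'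
    rw [Finset.mem_Icc] at hk hk'
    have h5 : ((k + k' : ℕ) : ZMod n) = 0 := by push_cast; linear_combination -he
    have := Nat.le_of_dvd (by omega) ((ZMod.natCast_eq_zero_iff _ _).1 h5)
    omega
  have hinj1 : Set.InjOn (fun k : ℕ => v + (k : ZMod n)) ↑(Finset.Icc 1 r) := by
    intro a ha b hb he
    simp only [Finset.coe_Icc, Set.mem_Icc] at ha hb
    have h5 : (a : ZMod n) = (b : ZMod n) := add_left_cancel he
    exact zmodCast_inj (by omega) (by omega) h5
  have hinj2 : Set.InjOn (fun k : ℕ => v - (k : ZMod n)) ↑(Finset.Icc 1 r) := by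
    intro a ha b hb he
    simp only [Finset.coe_Icc, Set.mem_Icc] at ha hb
    have h5 : (a : ZMod n) = (b : ZMod n) := by linear_combination -he
    exact zmodCast_inj (by omega) (by omega) h5
  have hNcard : N.card = 2 * r := by
    rw [hN, Finset.card_union_of_disjoint hdisj,
      Finset.card_image_of_injOn hinj1, Finset.card_image_of_injOn hinj2, Nat.card_Icc]
    omega
  rw [he1, he2, he3, hNs, Set.ncard_coe_finset, hNcard]

/-! ### Main theorem -/

/-- For `r ≥ 2` and `n/2 < 4r < n`, if deleting a set `D` of at most
`2r` edges of the circulant graph `C_n(1, …, r)` disconnects it, then `D` is exactly the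
incidence set of a single vertex. In particular every cut with `2 ≤ |U| ≤ n − 2` has size
strictly greater than `2r`. -/
theorem circulant_edge_connectivity (n r : ℕ) (hr : 2 ≤ r)
    (h1 : n < 8 * r) (h2 : 4 * r < n) :
    (∀ D : Finset (Sym2 (ZMod n)), ↑D ⊆ (circulant n r).edgeSet → D.card ≤ 2 * r →
      ¬ ((circulant n r).deleteEdges ↑D).Preconnected →
      ∃ v : ZMod n, ↑D = (circulant n r).incidenceSet v) ∧
    ∀ U : Finset (ZMod n), 2 ≤ U.card → U.card ≤ n - 2 →
      2 * r < cutSize (circulant n r) ↑U := by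
  classical
  haveI : NeZero n := ⟨by omega⟩
  refine ⟨?_, fun U hU1 hU2 => cut_lower n r hr h2 U hU1 hU2⟩
  intro D hDsub hDcard hdis
  rw [SimpleGraph.Preconnected] at hdis
  push_neg at hdis
  obtain ⟨a, b, hab⟩ := hdis
  set G := circulant n r with hG
  set G' := G.deleteEdges ↑D with hG'
  set U : Finset (ZMod n) := Finset.univ.filter (fun x => G'.Reachable a x) with hU
  have haU : a ∈ U := by
    rw [hU, Finset.mem_filter]
    exact ⟨Finset.mem_univ _, SimpleGraph.Reachable.refl a⟩
  have hbU : b ∉ U := by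
    rw [hU, Finset.mem_filter]
    intro h
    exact hab h.2
  have hcross : ∀ x y : ZMod n, x ∈ U → y ∉ U → G.Adj x y → s(x, y) ∈ D := by
    intro x y hx hy hadj
    by_contra hne
    apply hy
    rw [hU, Finset.mem_filter] at hx ⊢
    refine ⟨Finset.mem_univ _, hx.2.trans (SimpleGraph.Adj.reachable ?_)⟩
    rw [hG', SimpleGraph.deleteEdges_adj]
    exact ⟨hadj, hne⟩
  set S : Set (Sym2 (ZMod n)) := {e | e ∈ G.edgeSet ∧
    ∃ x y, e = s(x, y) ∧ x ∈ (↑U : Set (ZMod n)) ∧ y ∉ (↑U : Set (ZMod n))} with hS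
  have hSD : S ⊆ ↑D := by
    rintro e ⟨hee, x, y, rfl, hx, hy⟩
    exact hcross x y (by simpa using hx) (by simpa using hy) ((SimpleGraph.mem_edgeSet G).1 hee)
  have hcut : cutSize G ↑U ≤ 2 * r := by
    have hq1 : cutSize G ↑U = S.ncard := Nat.card_coe_set_eq S
    have hq2 : S.ncard ≤ (↑D : Set (Sym2 (ZMod n))).ncard :=
      Set.ncard_le_ncard hSD (D.finite_toSet)
    rw [Set.ncard_coe_finset] at hq2
    omega
  have hUsize : U.card ≤ 1 ∨ n - 1 ≤ U.card := by
    by_contra hcon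
    push_neg at hcon
    have hcl := cut_lower n r hr h2 U (by omega) (by omega)
    rw [← hG] at hcl
    omega
  have hU1 : 1 ≤ U.card := Finset.card_pos.2 ⟨a, haU⟩
  have hUn : U.card ≤ n - 1 := by
    have hle := Finset.card_le_univ U
    rw [ZMod.card] at hle
    rcases Nat.lt_or_ge U.card n with h | h
    · omega
    · exfalso
      have huniv : U = Finset.univ := Finset.eq_univ_of_card U (by rw [ZMod.card]; omega)
      exact hbU (huniv ▸ Finset.mem_univ b)
  have hfinish : ∀ v : ZMod n, G.incidenceSet v ⊆ ↑D → (↑D : Set (Sym2 (ZMod n))) = G.incidenceSet v := by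
    intro v hinc
    have hcard : (G.incidenceSet v).ncard = 2 * r :=
      circulant_incidence_ncard n r (by omega) h2 v
    have hle : (↑D : Set (Sym2 (ZMod n))).ncard ≤ (G.incidenceSet v).ncard := by
      rw [Set.ncard_coe_finset, hcard]
      exact hDcard
    exact (Set.eq_of_subset_of_ncard_le hinc hle (D.finite_toSet)).symm
  rcases hUsize with hv | hv
  · have hc1 : U.card = 1 := le_antisymm hv hU1
    obtain ⟨v, hveq⟩ := Finset.card_eq_one.1 hc1
    refine ⟨v, hfinish v ?_⟩
    rintro e ⟨hee, hve⟩
    obtain ⟨w, rfl⟩ := Sym2.mem_iff_exists.1 hve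
    have hadj : G.Adj v w := (SimpleGraph.mem_edgeSet G).1 hee
    have hwv : w ≠ v := hadj.ne'
    apply hcross v w
    · rw [hveq]; exact Finset.mem_singleton_self v
    · rw [hveq, Finset.mem_singleton]; exact hwv
    · exact hadj
  · have hc1 : Uᶜ.card = 1 := by
      rw [Finset.card_compl, ZMod.card]
      omega
    obtain ⟨v, hveq⟩ := Finset.card_eq_one.1 hc1
    have hvU : v ∉ U := by
      have : v ∈ Uᶜ := by rw [hveq]; exact Finset.mem_singleton_self v
      rwa [Finset.mem_compl] at this
    refine ⟨v, hfinish v ?_⟩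
    rintro e ⟨hee, hve⟩
    obtain ⟨w, rfl⟩ := Sym2.mem_iff_exists.1 hve
    have hadj : G.Adj v w := (SimpleGraph.mem_edgeSet G).1 hee
    have hwv : w ≠ v := hadj.ne'
    have hwU : w ∈ U := by
      by_contra hw
      have : w ∈ Uᶜ := Finset.mem_compl.2 hw
      rw [hveq] at this
      exact hwv (Finset.mem_singleton.1 this)
    have := hcross w v hwU hvU hadj.symm
    rwa [Sym2.eq_swap]
end

section
/- Let n ≥ 5 and r ≥ 2 be integers with 2r < n, and let G be the circulant graph C_n(1,…,r) on vertex set ZMod n. For each i ∈ ZMod n, the three pairs {i−1, i}, {i, i+1}, {i−1, i+1} are edges of G forming a triangle τ_i. If D is a set of edges of G with |D| ≤ ⌈n/2⌉ − 1, then at least one of the n triangles τ_i has all three of its edges in E(G) \ D; in particular, the spanning subgraph with edge set E(G) \ D contains an odd cycle. -/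
/-- Let `n ≥ 5`, `r ≥ 2` and `2r < n`, and let `G = C_n(1, …, r)`.
For every `i`, the pairs `{i−1, i}`, `{i, i+1}`, `{i−1, i+1}` are edges of `G` (forming a
triangle `τ_i`), and whenever at most `⌈n/2⌉ − 1` edges are deleted from `G`, some
triangle `τ_i` survives entirely; in particular the resulting spanning subgraph contains
an odd cycle (is not 2-colorable). -/
theorem circulant_triangle_survives (n r : ℕ) (hn : 5 ≤ n) (hr : 2 ≤ r) (hrn : 2 * r < n) :
    (∀ i : ZMod n,
      (circulant n r).Adj (i - 1) i ∧ (circulant n r).Adj i (i + 1) ∧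
        (circulant n r).Adj (i - 1) (i + 1)) ∧
    ∀ D : Finset (Sym2 (ZMod n)), ↑D ⊆ (circulant n r).edgeSet →
      D.card ≤ (n + 1) / 2 - 1 →
      (∃ i : ZMod n, s(i - 1, i) ∉ D ∧ s(i, i + 1) ∉ D ∧ s(i - 1, i + 1) ∉ D) ∧
        ¬ ((circulant n r).deleteEdges ↑D).Colorable 2 := by
  haveI : NeZero n := ⟨by omega⟩
  have hz : ∀ m : ℕ, 0 < m → m < n → (m : ZMod n) ≠ 0 := by
    intro m hm hmn h
    rw [ZMod.natCast_eq_zero_iff] at h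
    exact absurd (Nat.le_of_dvd hm h) (by omega)
  have h1 : (1 : ZMod n) ≠ 0 := by have := hz 1 (by omega) (by omega); simpa using this
  have h2 : (2 : ZMod n) ≠ 0 := by have := hz 2 (by omega) (by omega); simpa using this
  have h3 : (3 : ZMod n) ≠ 0 := by have := hz 3 (by omega) (by omega); simpa using this
  have h4 : (4 : ZMod n) ≠ 0 := by have := hz 4 (by omega) (by omega); simpa using this
  have hadj : ∀ i : ZMod n,
      (circulant n r).Adj (i - 1) i ∧ (circulant n r).Adj i (i + 1) ∧
        (circulant n r).Adj (i - 1) (i + 1) := by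
    intro i
    refine ⟨⟨?_, Or.inr ⟨1, le_refl _, by omega, by push_cast; ring⟩⟩,
            ⟨?_, Or.inr ⟨1, le_refl _, by omega, by push_cast; ring⟩⟩,
            ⟨?_, Or.inr ⟨2, by omega, hr, by push_cast; ring⟩⟩⟩
    · intro h; exact h1 (by linear_combination -h)
    · intro h; exact h1 (by linear_combination -h)
    · intro h; exact h2 (by linear_combination -h)
  refine ⟨hadj, ?_⟩
  intro D hD hcard
  have key : ∃ i : ZMod n, s(i - 1, i) ∉ D ∧ s(i, i + 1) ∉ D ∧ s(i - 1, i + 1) ∉ D := by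
    by_contra hcon
    push_neg at hcon
    classical
    set F : ZMod n → Sym2 (ZMod n) := fun i =>
      if s(i - 1, i) ∈ D then s(i - 1, i)
      else if s(i, i + 1) ∈ D then s(i, i + 1) else s(i - 1, i + 1) with hFdef
    have hF : ∀ i, F i ∈ D := by
      intro i
      simp only [hFdef]
      split_ifs with ha hb
      · exact ha
      · exact hb
      · exact hcon i ha hb
    have hFmem : ∀ i, F i = s(i - 1, i) ∨ F i = s(i, i + 1) ∨ F i = s(i - 1, i + 1) := by
      intro i
      simp only [hFdef]
      split_ifs
      · exact Or.inl rfl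
      · exact Or.inr (Or.inl rfl)
      · exact Or.inr (Or.inr rfl)
    -- pairwise lemma
    have pairwise : ∀ i j : ZMod n, i ≠ j → F i = F j →
        (F i = s(i - 1, i) ∧ F j = s(j, j + 1)) ∨
        (F i = s(i, i + 1) ∧ F j = s(j - 1, j)) := by
      intro i j hij hFij
      rcases hFmem i with hi | hi | hi <;> rcases hFmem j with hj | hj | hj <;>
        rw [hi, hj, Sym2.eq_iff] at hFij
      · rcases hFij with ⟨e1, e2⟩ | ⟨e1, e2⟩
        · exact absurd e2 hij
        · exact absurd (show (2 : ZMod n) = 0 by linear_combination e2 - e1) h2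
      · -- s(i-1,i) = s(j,j+1): need i-1=j ∧ i=j+1
        rcases hFij with ⟨e1, e2⟩ | ⟨e1, e2⟩
        · exact Or.inl ⟨hi, hj⟩
        · exact absurd (show (2 : ZMod n) = 0 by linear_combination e2 - e1) h2
      · rcases hFij with ⟨e1, e2⟩ | ⟨e1, e2⟩
        · exact absurd (show (1 : ZMod n) = 0 by linear_combination e1 - e2) h1
        · exact absurd (show (3 : ZMod n) = 0 by linear_combination e2 - e1) h3
      · rcases hFij with ⟨e1, e2⟩ | ⟨e1, e2⟩
        · exact Or.inr ⟨hi, hj⟩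
        · exact absurd (show (2 : ZMod n) = 0 by linear_combination e2 - e1) h2
      · rcases hFij with ⟨e1, e2⟩ | ⟨e1, e2⟩
        · exact absurd e1 hij
        · exact absurd (show (2 : ZMod n) = 0 by linear_combination e2 - e1) h2
      · rcases hFij with ⟨e1, e2⟩ | ⟨e1, e2⟩
        · exact absurd (show (1 : ZMod n) = 0 by linear_combination e1 - e2) h1
        · exact absurd (show (3 : ZMod n) = 0 by linear_combination e2 - e1) h3
      · rcases hFij with ⟨e1, e2⟩ | ⟨e1, e2⟩
        · exact absurd (show (1 : ZMod n) = 0 by linear_combination e2 - e1) h1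
        · exact absurd (show (3 : ZMod n) = 0 by linear_combination e2 - e1) h3
      · rcases hFij with ⟨e1, e2⟩ | ⟨e1, e2⟩
        · exact absurd (show (1 : ZMod n) = 0 by linear_combination e2 - e1) h1
        · exact absurd (show (3 : ZMod n) = 0 by linear_combination e2 - e1) h3
      · rcases hFij with ⟨e1, e2⟩ | ⟨e1, e2⟩
        · exact absurd e2 fun h => hij (by linear_combination h)
        · exact absurd (show (4 : ZMod n) = 0 by linear_combination e2 - e1) h4
    have hLR : ∀ i : ZMod n, s(i - 1, i) ≠ s(i, i + 1) := by
      intro i h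
      rw [Sym2.eq_iff] at h
      rcases h with ⟨e1, e2⟩ | ⟨e1, e2⟩
      · exact h1 (by linear_combination -e1)
      · exact h2 (by linear_combination -e1)
    have hfiber : ∀ e ∈ D, (Finset.univ.filter (fun i => F i = e)).card ≤ 2 := by
      intro e _
      by_contra hc
      push_neg at hc
      rw [Finset.two_lt_card_iff] at hc
      obtain ⟨a, b, c, ha, hb, hc', hab, hac, hbc⟩ := hc
      simp only [Finset.mem_filter] at ha hb hc'
      have hab' := pairwise a b hab (ha.2.trans hb.2.symm)
      have hac' := pairwise a c hac (ha.2.trans hc'.2.symm)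
      have hbc' := pairwise b c hbc (hb.2.trans hc'.2.symm)
      rcases hab' with ⟨ha1, hb1⟩ | ⟨ha1, hb1⟩
      · rcases hac' with ⟨_, hc1⟩ | ⟨ha2, _⟩
        · rcases hbc' with ⟨hb2, _⟩ | ⟨_, hc2⟩
          · exact hLR b (hb2.symm.trans hb1)
          · exact hLR c (hc2.symm.trans hc1)
        · exact hLR a (ha1.symm.trans ha2)
      · rcases hac' with ⟨ha2, _⟩ | ⟨_, hc1⟩
        · exact hLR a (ha2.symm.trans ha1)
        · rcases hbc' with ⟨_, hc2⟩ | ⟨hb2, _⟩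
          · exact hLR c (hc1.symm.trans hc2)
          · exact hLR b (hb1.symm.trans hb2)
    have hcount : (Finset.univ : Finset (ZMod n)).card ≤ 2 * D.card :=
      Finset.card_le_mul_card_image_of_maps_to (fun a _ => hF a) 2 hfiber
    rw [Finset.card_univ, ZMod.card] at hcount
    omega
  refine ⟨key, ?_⟩
  rintro ⟨C⟩
  obtain ⟨i, hi1, hi2, hi3⟩ := key
  obtain ⟨a1, a2, a3⟩ := hadj i
  have c1 : C (i - 1) ≠ C i := C.valid (by
    rw [SimpleGraph.deleteEdges_adj]; exact ⟨a1, by simpa using hi1⟩)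
  have c2 : C i ≠ C (i + 1) := C.valid (by
    rw [SimpleGraph.deleteEdges_adj]; exact ⟨a2, by simpa using hi2⟩)
  have c3 : C (i - 1) ≠ C (i + 1) := C.valid (by
    rw [SimpleGraph.deleteEdges_adj]; exact ⟨a3, by simpa using hi3⟩)
  have : ∀ x y z : Fin 2, x ≠ y → y ≠ z → x ≠ z → False := by decide
  exact this _ _ _ c1 c2 c3
end
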